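/- arXiv:1707.05126 — 4 statements merged into one kernel-verified Lean document; each statement's English description precedes it below -/
import Mathlib

section
/- A function f(z) = z - Σ_{n≥2} a_n z^n with a_n ≥ 0 satisfies Re[ z f'(z) / (β z f'(z) + (1-β) f(z)) ] > α for all z ∈ U if and only if Σ_{n≥2} (n-α-(n-1)αβ) a_n ≤ 1-α. -/
open Complex

lemma geomAux (k : ℕ) {q : ℝ} (hq0 : 0 < q) (hq1 : q < 1) :
    Summable (fun n : ℕ => ((n : ℝ) + 2) ^ k * q ^ n) := by
  have h := summable_pow_mul_geometric_of_norm_lt_one (R := ℝ) k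
    (r := q) (by rwa [Real.norm_eq_abs, _root_.abs_of_pos hq0])
  have h2 : Summable (fun n : ℕ => (((n + 2 : ℕ) : ℝ)) ^ k * q ^ (n + 2)) :=
    h.comp_injective (add_left_injective 2)
  have h3 := h2.mul_left (q ^ 2)⁻¹
  refine h3.congr fun n => ?_
  push_cast
  field_simp
  ring

lemma lemA {a : ℕ → ℝ} {f : ℂ → ℂ}
    (hf : ∀ z ∈ Metric.ball (0 : ℂ) 1,
      HasSum (fun n : ℕ => ((a (n + 2) : ℝ) : ℂ) * z ^ (n + 2)) (z - f z))
    {r : ℝ} (hr0 : 0 ≤ r) (hr1 : r < 1) :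
    Summable (fun n : ℕ => a (n + 2) * r ^ (n + 2)) := by
  have hz : (r : ℂ) ∈ Metric.ball (0 : ℂ) 1 := by
    rw [Metric.mem_ball, dist_zero_right, Complex.norm_real, Real.norm_eq_abs,
      _root_.abs_of_nonneg hr0]
    exact hr1
  have h := (hf _ hz).summable
  rw [← Complex.summable_ofReal]
  refine h.congr fun n => ?_
  push_cast
  ring

lemma lemB {a : ℕ → ℝ} (ha : ∀ n, 0 ≤ a n)
    (hA : ∀ r : ℝ, 0 ≤ r → r < 1 → Summable (fun n : ℕ => a (n + 2) * r ^ (n + 2)))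
    (k : ℕ) {s : ℝ} (hs0 : 0 < s) (hs1 : s < 1) :
    Summable (fun n : ℕ => ((n : ℝ) + 2) ^ k * a (n + 2) * s ^ n) := by
  obtain ⟨r, hr0, hsr, hr1⟩ : ∃ r : ℝ, 0 < r ∧ s < r ∧ r < 1 :=
    ⟨(1 + s) / 2, by linarith, by linarith, by linarith⟩
  have hsum := hA r hr0.le hr1
  obtain ⟨M, hM0, hle⟩ : ∃ M : ℝ, 0 ≤ M ∧ ∀ n, a (n + 2) * r ^ (n + 2) ≤ M := by
    refine ⟨∑' n, a (n + 2) * r ^ (n + 2),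
      tsum_nonneg (fun n => by have := ha (n + 2); positivity), fun n => ?_⟩
    exact Summable.le_tsum hsum n (fun m _ => by have := ha (m + 2); positivity)
  have hq0 : 0 < s / r := by positivity
  have hq1 : s / r < 1 := (div_lt_one hr0).2 hsr
  have hgeo := (geomAux k hq0 hq1).mul_left (M / r ^ 2)
  refine Summable.of_nonneg_of_le
    (fun n => by have := ha (n + 2); positivity) (fun n => ?_) hgeo
  have h1 : a (n + 2) * s ^ n ≤ M / r ^ 2 * (s / r) ^ n := by
    have h2 : a (n + 2) * r ^ (n + 2) * (s / r) ^ n ≤ M * (s / r) ^ n :=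
      mul_le_mul_of_nonneg_right (hle n) (by positivity)
    have h3 : a (n + 2) * r ^ (n + 2) * (s / r) ^ n = a (n + 2) * s ^ n * r ^ 2 := by
      rw [div_pow, pow_add]
      field_simp
    rw [h3] at h2
    rw [div_mul_eq_mul_div, le_div_iff₀ (by positivity)]
    exact h2
  calc ((n : ℝ) + 2) ^ k * a (n + 2) * s ^ n
      = ((n : ℝ) + 2) ^ k * (a (n + 2) * s ^ n) := by ring
    _ ≤ ((n : ℝ) + 2) ^ k * (M / r ^ 2 * (s / r) ^ n) :=
        mul_le_mul_of_nonneg_left h1 (by positivity)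
    _ = M / r ^ 2 * (((n : ℝ) + 2) ^ k * (s / r) ^ n) := by ring

lemma lemC {a : ℕ → ℝ} (ha : ∀ n, 0 ≤ a n)
    (hB : ∀ (k : ℕ) {s : ℝ}, 0 < s → s < 1 →
      Summable (fun n : ℕ => ((n : ℝ) + 2) ^ k * a (n + 2) * s ^ n))
    (c : ℕ → ℝ) (k : ℕ) (C : ℝ)
    (hc : ∀ n, |c n| ≤ C * ((n : ℝ) + 2) ^ k * a (n + 2))
    {z : ℂ} (hz : ‖z‖ < 1) :
    HasDerivAt (fun w : ℂ => ∑' n : ℕ, ((c n : ℝ) : ℂ) * w ^ (n + 2))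
      (∑' n : ℕ, (((((n : ℝ) + 2) * c n : ℝ)) : ℂ) * z ^ (n + 1)) z := by
  set s : ℝ := (1 + ‖z‖) / 2 with hs
  have hz0 : 0 ≤ ‖z‖ := norm_nonneg z
  have hs0 : 0 < s := by rw [hs]; positivity
  have hs1 : s < 1 := by rw [hs]; linarith
  have hzs : ‖z‖ < s := by rw [hs]; linarith
  have hu : Summable (fun n : ℕ => (C * s) * (((n : ℝ) + 2) ^ (k + 1) * a (n + 2) * s ^ n)) :=
    (hB (k + 1) hs0 hs1).mul_left _
  have key := hasDerivAt_tsum_of_isPreconnected hu (Metric.isOpen_ball)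
    ((convex_ball (0 : ℂ) s).isPreconnected)
    (g := fun n w => ((c n : ℝ) : ℂ) * w ^ (n + 2))
    (g' := fun n w => (((((n : ℝ) + 2) * c n : ℝ)) : ℂ) * w ^ (n + 1))
    (fun n w _ => by
      have h := (hasDerivAt_pow (n + 2) w).const_mul ((c n : ℝ) : ℂ)
      convert h using 1
      · rfl
      push_cast
      ring)
    (fun n w hw => by
      rw [Metric.mem_ball, dist_zero_right] at hw
      rw [norm_mul, norm_pow, Complex.norm_real, Real.norm_eq_abs]
      have h1 : |((n : ℝ) + 2) * c n| = ((n : ℝ) + 2) * |c n| := by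
        rw [abs_mul, _root_.abs_of_nonneg (by positivity : (0:ℝ) ≤ (n : ℝ) + 2)]
      rw [h1]
      have h2 : ‖w‖ ^ (n + 1) ≤ s ^ (n + 1) :=
        pow_le_pow_left₀ (norm_nonneg w) hw.le _
      calc ((n : ℝ) + 2) * |c n| * ‖w‖ ^ (n + 1)
          ≤ ((n : ℝ) + 2) * (C * ((n : ℝ) + 2) ^ k * a (n + 2)) * s ^ (n + 1) := by
            have hb := hc n
            have := ha (n + 2)
            have h3 : ((n : ℝ) + 2) * |c n| ≤ ((n : ℝ) + 2) * (C * ((n : ℝ) + 2) ^ k * a (n + 2)) :=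
              mul_le_mul_of_nonneg_left hb (by positivity)
            have h4 : ((n : ℝ) + 2) * |c n| * ‖w‖ ^ (n + 1) ≤ ((n : ℝ) + 2) * |c n| * s ^ (n + 1) :=
              mul_le_mul_of_nonneg_left h2 (by positivity)
            refine h4.trans (mul_le_mul_of_nonneg_right h3 (by positivity))
        _ = C * s * (((n : ℝ) + 2) ^ (k + 1) * a (n + 2) * s ^ n) := by rw [pow_succ]; ring)
    (Metric.mem_ball_self hs0)
    (by
      refine (summable_zero).congr fun n => ?_
      simp [pow_succ])
    (by rwa [Metric.mem_ball, dist_zero_right])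
  exact key

set_option maxHeartbeats 2000000 in
theorem stmt7 (α β : ℝ) (hα0 : 0 ≤ α) (hα1 : α < 1) (hβ0 : 0 ≤ β) (hβ1 : β < 1)
    (f : ℂ → ℂ) (a : ℕ → ℝ) (ha : ∀ n, 0 ≤ a n)
    (hf : ∀ z ∈ Metric.ball (0 : ℂ) 1,
      HasSum (fun n : ℕ => ((a (n + 2) : ℝ) : ℂ) * z ^ (n + 2)) (z - f z)) :
    (∀ z ∈ Metric.ball (0 : ℂ) 1, z ≠ 0 →
      α < ((z * deriv f z /
        ((β : ℂ) * z * deriv f z + (1 - (β : ℂ)) * f z)).re)) ↔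
    (Summable (fun n : ℕ =>
      (((n : ℝ) + 2) - α - ((n : ℝ) + 1) * α * β) * a (n + 2)) ∧
    ∑' n : ℕ, (((n : ℝ) + 2) - α - ((n : ℝ) + 1) * α * β) * a (n + 2) ≤ 1 - α) := by
  classical
  set d : ℕ → ℝ := fun n => ((n : ℝ) + 2) - α - ((n : ℝ) + 1) * α * β with hd
  have hd_lb : ∀ n : ℕ, (1 - α) * ((n : ℝ) + 2) ≤ d n := by
    intro n
    have key : 0 ≤ α * (1 - β) * ((n : ℝ) + 1) :=
      mul_nonneg (mul_nonneg hα0 (by linarith)) (by positivity)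
    rw [hd]
    simp only
    nlinarith [key]
  have hd_pos : ∀ n : ℕ, 0 < d n := fun n =>
    lt_of_lt_of_le (mul_pos (by linarith) (by positivity)) (hd_lb n)
  have hd_ub : ∀ n : ℕ, d n ≤ (n : ℝ) + 2 := by
    intro n
    have key : 0 ≤ α * β * ((n : ℝ) + 1) := by positivity
    rw [hd]
    simp only
    nlinarith [key]
  have hA : ∀ r : ℝ, 0 ≤ r → r < 1 → Summable (fun n : ℕ => a (n + 2) * r ^ (n + 2)) :=
    fun r h0 h1 => lemA hf h0 h1
  have hB : ∀ (k : ℕ) {s : ℝ}, 0 < s → s < 1 →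
      Summable (fun n : ℕ => ((n : ℝ) + 2) ^ k * a (n + 2) * s ^ n) :=
    fun k _ h0 h1 => lemB ha hA k h0 h1
  set c1 : ℕ → ℝ := fun n => ((n : ℝ) + 2) * a (n + 2) with hc1
  set S2 : ℂ → ℂ := fun z => ∑' n : ℕ, ((a (n + 2) : ℝ) : ℂ) * z ^ (n + 2) with hS2
  set S1 : ℂ → ℂ := fun z => ∑' n : ℕ, ((c1 n : ℝ) : ℂ) * z ^ (n + 2) with hS1
  set D : ℂ → ℂ := fun z => ∑' n : ℕ, ((c1 n : ℝ) : ℂ) * z ^ (n + 1) with hD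
  -- summability of c1-series at radius r
  have hsum_s1 : ∀ r : ℝ, 0 < r → r < 1 → Summable (fun n : ℕ => c1 n * r ^ (n + 2)) := by
    intro r h0 h1
    refine ((hB 1 h0 h1).mul_right (r ^ 2)).congr fun n => ?_
    rw [hc1]
    simp only [pow_one]
    ring
  have hsum_d : ∀ r : ℝ, 0 < r → r < 1 → Summable (fun n : ℕ => d n * a (n + 2) * r ^ (n + 2)) := by
    intro r h0 h1
    refine Summable.of_nonneg_of_le (fun n => by
        have := ha (n + 2); have := (hd_pos n).le; positivity)
      (fun n => ?_) (hsum_s1 r h0 h1)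
    rw [hc1]
    have h2 : (0:ℝ) ≤ r ^ (n + 2) := by positivity
    exact mul_le_mul_of_nonneg_right
      (mul_le_mul_of_nonneg_right (hd_ub n) (ha (n + 2))) h2
  have hc1nn : ∀ n : ℕ, 0 ≤ c1 n := fun n => by
    rw [hc1]; have := ha (n + 2); positivity
  -- derivative facts
  have hS2deriv : ∀ z : ℂ, ‖z‖ < 1 → HasDerivAt S2 (D z) z := by
    intro z hz
    have h := lemC ha hB (fun n => a (n + 2)) 0 1
      (fun n => by rw [_root_.abs_of_nonneg (ha (n + 2))]; simp) hz
    rw [hS2, hD]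
    convert h using 2
  have hS1deriv : ∀ z : ℂ, ‖z‖ < 1 → HasDerivAt S1
      (∑' n : ℕ, (((((n : ℝ) + 2) * c1 n : ℝ)) : ℂ) * z ^ (n + 1)) z := by
    intro z hz
    refine lemC ha hB c1 1 1 (fun n => ?_) hz
    rw [hc1, _root_.abs_of_nonneg (by have := ha (n + 2); positivity)]
    simp [pow_one]
  have hfval : ∀ z ∈ Metric.ball (0 : ℂ) 1, f z = z - S2 z := by
    intro z hz
    have h := (hf z hz).tsum_eq
    rw [hS2]
    beta_reduce
    linear_combination h
  have hfderiv : ∀ z ∈ Metric.ball (0 : ℂ) 1, HasDerivAt f (1 - D z) z := by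
    intro z hz
    have hz' : ‖z‖ < 1 := by rwa [Metric.mem_ball, dist_zero_right] at hz
    have h1 : HasDerivAt (fun w => w - S2 w) (1 - D z) z :=
      (hasDerivAt_id z).sub (hS2deriv z hz')
    refine h1.congr_of_eventuallyEq ?_
    filter_upwards [Metric.isOpen_ball.mem_nhds hz] with w hw
    exact hfval w hw
  have hzD : ∀ z : ℂ, z * D z = S1 z := by
    intro z
    rw [hD, hS1, ← tsum_mul_left]
    exact tsum_congr fun n => by ring
  have hF : ∀ z ∈ Metric.ball (0 : ℂ) 1, z * deriv f z = z - S1 z := by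
    intro z hz
    rw [(hfderiv z hz).deriv, mul_sub, mul_one, hzD]
  have hG : ∀ z ∈ Metric.ball (0 : ℂ) 1,
      (β : ℂ) * z * deriv f z + (1 - (β : ℂ)) * f z
        = z - ((β : ℂ) * S1 z + (1 - (β : ℂ)) * S2 z) := by
    intro z hz
    rw [(hfderiv z hz).deriv, hfval z hz]
    have h := hzD z
    linear_combination (-(β : ℂ)) * h
  -- real versions
  set s1 : ℝ → ℝ := fun r => ∑' n : ℕ, c1 n * r ^ (n + 2) with hs1
  set s2 : ℝ → ℝ := fun r => ∑' n : ℕ, a (n + 2) * r ^ (n + 2) with hs2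
  have hS1r : ∀ r : ℝ, S1 (r : ℂ) = ((s1 r : ℝ) : ℂ) := by
    intro r
    rw [hS1, hs1, Complex.ofReal_tsum]
    exact tsum_congr fun n => by push_cast; ring
  have hS2r : ∀ r : ℝ, S2 (r : ℂ) = ((s2 r : ℝ) : ℂ) := by
    intro r
    rw [hS2, hs2, Complex.ofReal_tsum]
    exact tsum_congr fun n => by push_cast; ring
  constructor
  · intro h
    set g : ℝ → ℝ := fun r => r - (β * s1 r + (1 - β) * s2 r) with hg
    have hexpr : ∀ r : ℝ, 0 < r → r < 1 → α < (r - s1 r) / g r := by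
      intro r h0 h1
      have hzball : (r : ℂ) ∈ Metric.ball (0 : ℂ) 1 := by
        rw [Metric.mem_ball, dist_zero_right, Complex.norm_real, Real.norm_eq_abs,
          _root_.abs_of_nonneg h0.le]
        exact h1
      have hzne : (r : ℂ) ≠ 0 := by exact_mod_cast h0.ne'
      have hh := h _ hzball hzne
      rw [hF _ hzball, hG _ hzball, hS1r, hS2r] at hh
      have hcast : ((r : ℂ) - ((s1 r : ℝ) : ℂ)) /
          ((r : ℂ) - ((β : ℂ) * ((s1 r : ℝ) : ℂ) + (1 - (β : ℂ)) * ((s2 r : ℝ) : ℂ)))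
          = (((r - s1 r) / g r : ℝ) : ℂ) := by
        rw [hg]
        push_cast
        ring
      rw [hcast, Complex.ofReal_re] at hh
      exact hh
    have hGne : ∀ r : ℝ, 0 < r → r < 1 → g r ≠ 0 := by
      intro r h0 h1 hzero
      have := hexpr r h0 h1
      rw [hzero, div_zero] at this
      linarith
    have hcont : ∀ x : ℝ, |x| < 1 → ContinuousAt g x := by
      intro x hx
      have hx' : ‖(x : ℂ)‖ < 1 := by rwa [Complex.norm_real, Real.norm_eq_abs]
      have hc1' : ContinuousAt (fun r : ℝ => S1 (r : ℂ)) x :=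
        (hS1deriv _ hx').continuousAt.comp Complex.continuous_ofReal.continuousAt
      have hc2' : ContinuousAt (fun r : ℝ => S2 (r : ℂ)) x :=
        (hS2deriv _ hx').continuousAt.comp Complex.continuous_ofReal.continuousAt
      have hgeq : g = fun r : ℝ => r - (β * (S1 (r : ℂ)).re + (1 - β) * (S2 (r : ℂ)).re) := by
        funext r
        rw [hg]
        simp only
        rw [hS1r r, hS2r r, Complex.ofReal_re, Complex.ofReal_re]
      rw [hgeq]
      exact continuousAt_id.sub
        ((continuousAt_const.mul (Complex.continuous_re.continuousAt.comp hc1')).add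
          (continuousAt_const.mul (Complex.continuous_re.continuousAt.comp hc2')))
    have hsum_half : Summable (fun n : ℕ => c1 n * (1 / 2 : ℝ) ^ n) := by
      refine (hB 1 (s := (1/2 : ℝ)) (by norm_num) (by norm_num)).congr fun n => ?_
      rw [hc1, pow_one]
    set C0 : ℝ := ∑' n : ℕ, c1 n * (1 / 2 : ℝ) ^ n with hC0def
    have hC0 : 0 ≤ C0 :=
      tsum_nonneg fun n => mul_nonneg (hc1nn n) (by positivity)
    have hs1le : ∀ r : ℝ, 0 < r → r ≤ 1 / 2 → s1 r ≤ C0 * r ^ 2 := by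
      intro r h0 h12
      have hterm : ∀ n : ℕ, c1 n * r ^ (n + 2) ≤ c1 n * (1 / 2 : ℝ) ^ n * r ^ 2 := by
        intro n
        have h2 : r ^ n ≤ (1 / 2 : ℝ) ^ n := pow_le_pow_left₀ h0.le h12 n
        calc c1 n * r ^ (n + 2) = c1 n * r ^ n * r ^ 2 := by ring
          _ ≤ c1 n * (1 / 2 : ℝ) ^ n * r ^ 2 :=
              mul_le_mul_of_nonneg_right
                (mul_le_mul_of_nonneg_left h2 (hc1nn n)) (by positivity)
      have hsle := Summable.tsum_le_tsum hterm (hsum_s1 r h0 (by linarith)) (hsum_half.mul_right (r ^ 2))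
      rw [hs1]
      calc (∑' n : ℕ, c1 n * r ^ (n + 2)) ≤ ∑' n : ℕ, c1 n * (1 / 2 : ℝ) ^ n * r ^ 2 := hsle
        _ = C0 * r ^ 2 := by rw [hC0def, ← tsum_mul_right]
    set p : ℝ := min (1 / 2) (1 / (C0 + 1)) with hp
    have hp0 : 0 < p := lt_min (by norm_num) (by positivity)
    have hp12 : p ≤ 1 / 2 := min_le_left _ _
    have hp1 : p < 1 := lt_of_le_of_lt hp12 (by norm_num)
    have hs2les1 : ∀ r : ℝ, 0 < r → r < 1 → s2 r ≤ s1 r := by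
      intro r h0 h1
      rw [hs1, hs2]
      refine Summable.tsum_le_tsum (fun n => ?_) (hA r h0.le h1) (hsum_s1 r h0 h1)
      have h2 : a (n + 2) ≤ c1 n := by
        rw [hc1]
        simp only
        nlinarith [mul_nonneg (Nat.cast_nonneg (α := ℝ) n) (ha (n + 2)), ha (n + 2)]
      have h3 : (0:ℝ) ≤ r ^ (n + 2) := by positivity
      exact mul_le_mul_of_nonneg_right h2 h3
    have hgp : 0 < g p := by
      have h1 := hs1le p hp0 hp12
      have hC0p : C0 * p < 1 := by
        calc C0 * p ≤ C0 * (1 / (C0 + 1)) :=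
              mul_le_mul_of_nonneg_left (min_le_right _ _) hC0
          _ < 1 := by
              rw [mul_one_div, div_lt_one (by positivity)]
              linarith
      have hs2s1 := hs2les1 p hp0 hp1
      have hcomb : β * s1 p + (1 - β) * s2 p ≤ s1 p := by
        nlinarith [mul_le_mul_of_nonneg_left hs2s1 (by linarith : (0:ℝ) ≤ 1 - β)]
      rw [hg]
      simp only
      nlinarith
    have hGpos : ∀ r : ℝ, 0 < r → r < 1 → 0 < g r := by
      intro r h0 h1
      rcases lt_trichotomy (g r) 0 with hneg | hzero | hpos
      · exfalso
        rcases lt_trichotomy r p with hrp | hrp | hrp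
        · have hcont' : ContinuousOn g (Set.Icc r p) := fun x hx =>
            (hcont x (by
              rw [abs_lt]
              exact ⟨by linarith [hx.1], by linarith [hx.2]⟩)).continuousWithinAt
          obtain ⟨x, hxmem, hx0⟩ := intermediate_value_Icc hrp.le hcont' ⟨hneg.le, hgp.le⟩
          exact hGne x (lt_of_lt_of_le h0 hxmem.1) (lt_of_le_of_lt hxmem.2 hp1) hx0
        · rw [hrp] at hneg; linarith
        · have hcont' : ContinuousOn g (Set.Icc p r) := fun x hx =>
            (hcont x (by
              rw [abs_lt]
              exact ⟨by linarith [hx.1], by linarith [hx.2]⟩)).continuousWithinAt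
          obtain ⟨x, hxmem, hx0⟩ := intermediate_value_Icc' hrp.le hcont' ⟨hneg.le, hgp.le⟩
          exact hGne x (lt_of_lt_of_le hp0 hxmem.1) (lt_of_le_of_lt hxmem.2 h1) hx0
      · exact absurd hzero (hGne r h0 h1)
      · exact hpos
    have keysum : ∀ r : ℝ, 0 < r → r < 1 →
        (∑' n : ℕ, d n * a (n + 2) * r ^ (n + 2)) < (1 - α) * r := by
      intro r h0 h1
      have hgt := hexpr r h0 h1
      have hgpos := hGpos r h0 h1
      have hlt : α * g r < r - s1 r := (lt_div_iff₀ hgpos).1 hgt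
      rw [hg] at hlt
      simp only at hlt
      have heq : (∑' n : ℕ, d n * a (n + 2) * r ^ (n + 2))
          = (1 - α * β) * s1 r - (α * (1 - β)) * s2 r := by
        rw [hs1, hs2, ← tsum_mul_left, ← tsum_mul_left,
          ← Summable.tsum_sub ((hsum_s1 r h0 h1).mul_left _) ((hA r h0.le h1).mul_left _)]
        refine tsum_congr fun n => ?_
        rw [hd, hc1]
        simp only
        push_cast
        ring
      rw [heq]
      nlinarith
    have hfin : ∀ t : Finset ℕ, (∑ n ∈ t, d n * a (n + 2)) ≤ 1 - α := by
      intro t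
      have hco : Continuous (fun r : ℝ => ∑ n ∈ t, d n * a (n + 2) * r ^ (n + 2)) :=
        continuous_finset_sum t fun n _ => (continuous_const.mul (continuous_pow (n + 2)))
      have htend : Filter.Tendsto (fun r : ℝ => ∑ n ∈ t, d n * a (n + 2) * r ^ (n + 2))
          (nhdsWithin 1 (Set.Iio 1)) (nhds (∑ n ∈ t, d n * a (n + 2))) := by
        have h2 := hco.tendsto 1
        simp only [one_pow, mul_one] at h2
        exact h2.mono_left nhdsWithin_le_nhds
      refine le_of_tendsto htend ?_
      filter_upwards [Ioo_mem_nhdsLT_of_mem (show (1:ℝ) ∈ Set.Ioc 0 1 by norm_num)] with r hr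
      have h1 := keysum r hr.1 hr.2
      have h2 : (∑ n ∈ t, d n * a (n + 2) * r ^ (n + 2))
          ≤ ∑' n : ℕ, d n * a (n + 2) * r ^ (n + 2) :=
        Summable.sum_le_tsum t (fun n _ =>
          mul_nonneg (mul_nonneg (hd_pos n).le (ha _)) (pow_nonneg hr.1.le _)) (hsum_d r hr.1 hr.2)
      nlinarith [hr.2, hα1]
    have hsummable : Summable (fun n : ℕ => d n * a (n + 2)) :=
      summable_of_sum_le (fun n => mul_nonneg (hd_pos n).le (ha _)) hfin
    exact ⟨hsummable, Summable.tsum_le_of_sum_le hsummable hfin⟩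
  · rintro ⟨h1, h2⟩
    intro z hzball hzne
    have hz1 : ‖z‖ < 1 := by rwa [Metric.mem_ball, dist_zero_right] at hzball
    have hz0 : (0:ℝ) < ‖z‖ := norm_pos_iff.2 hzne
    set r : ℝ := ‖z‖ with hrdef
    rw [hF _ hzball, hG _ hzball]
    by_cases hall : ∀ n, a (n + 2) = 0
    · have hS1z : S1 z = 0 := by
        rw [hS1]
        simp only
        have : ∀ n : ℕ, ((c1 n : ℝ) : ℂ) * z ^ (n + 2) = 0 := fun n => by
          rw [hc1]; simp [hall n]
        rw [tsum_congr this, tsum_zero]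
      have hS2z : S2 z = 0 := by
        rw [hS2]
        simp only
        have : ∀ n : ℕ, ((a (n + 2) : ℝ) : ℂ) * z ^ (n + 2) = 0 := fun n => by
          simp [hall n]
        rw [tsum_congr this, tsum_zero]
      rw [hS1z, hS2z]
      have heq : (z - 0) / (z - ((β : ℂ) * 0 + (1 - (β : ℂ)) * 0)) = 1 := by
        simp only [mul_zero, add_zero, sub_zero]
        exact div_self hzne
      rw [heq]
      simpa using hα1
    · push_neg at hall
      obtain ⟨m, hm⟩ := hall
      have ham : 0 < a (m + 2) := lt_of_le_of_ne (ha (m + 2)) (Ne.symm hm)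
      have hSig : 0 < ∑' n : ℕ, d n * a (n + 2) :=
        Summable.tsum_pos h1 (fun n => mul_nonneg (hd_pos n).le (ha _)) m (mul_pos (hd_pos m) ham)
      -- summabilities
      have hsum_a := hA r hz0.le hz1
      have hsum_c1 := hsum_s1 r hz0 hz1
      have hsumc2 : Summable (fun n : ℕ => ((a (n + 2) : ℝ) : ℂ) * z ^ (n + 2)) :=
        (hf z hzball).summable
      have hnormc1 : (fun n : ℕ => ‖((c1 n : ℝ) : ℂ) * z ^ (n + 2)‖)
          = fun n : ℕ => c1 n * r ^ (n + 2) := by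
        funext n
        rw [norm_mul, norm_pow, Complex.norm_real, Real.norm_eq_abs,
          _root_.abs_of_nonneg (hc1nn n), hrdef]
      have hsumc1 : Summable (fun n : ℕ => ((c1 n : ℝ) : ℂ) * z ^ (n + 2)) :=
        Summable.of_norm (by rw [hnormc1]; exact hsum_c1)
      -- real T and E
      set T : ℝ := ∑' n : ℕ, (β * c1 n + (1 - β) * a (n + 2)) * r ^ (n + 2) with hT
      set E : ℝ := ∑' n : ℕ, (c1 n - a (n + 2)) * r ^ (n + 2) with hE
      have hsumT : Summable (fun n : ℕ => (β * c1 n + (1 - β) * a (n + 2)) * r ^ (n + 2)) :=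
        ((hsum_c1.mul_left β).add (hsum_a.mul_left (1 - β))).congr fun n => by ring
      have hsumE : Summable (fun n : ℕ => (c1 n - a (n + 2)) * r ^ (n + 2)) :=
        (hsum_c1.sub hsum_a).congr fun n => by ring
      have hcoefT : ∀ n : ℕ, 0 ≤ β * c1 n + (1 - β) * a (n + 2) := fun n => by
        have := hc1nn n
        have := ha (n + 2)
        nlinarith
      have hcoefE : ∀ n : ℕ, 0 ≤ c1 n - a (n + 2) := fun n => by
        rw [hc1]
        simp only
        nlinarith [mul_nonneg (Nat.cast_nonneg (α := ℝ) n) (ha (n + 2)), ha (n + 2)]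
      have hT0 : 0 ≤ T := tsum_nonneg fun n => mul_nonneg (hcoefT n) (by positivity)
      have hE0 : 0 ≤ E := tsum_nonneg fun n => mul_nonneg (hcoefE n) (by positivity)
      -- key inequality
      have hkeyeq : (1 - β) * E + (1 - α) * T = ∑' n : ℕ, d n * a (n + 2) * r ^ (n + 2) := by
        rw [hE, hT, ← tsum_mul_left, ← tsum_mul_left,
          ← Summable.tsum_add (hsumE.mul_left _) (hsumT.mul_left _)]
        refine tsum_congr fun n => ?_
        rw [hd, hc1]
        simp only
        push_cast
        ring
      have hlt : (∑' n : ℕ, d n * a (n + 2) * r ^ (n + 2)) < (1 - α) * r := by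
        have hle1 : (∑' n : ℕ, d n * a (n + 2) * r ^ (n + 2))
            ≤ (∑' n : ℕ, d n * a (n + 2)) * r ^ 2 := by
          rw [← tsum_mul_right]
          refine Summable.tsum_le_tsum (fun n => ?_) (hsum_d r hz0 hz1) (h1.mul_right _)
          have h3 : r ^ (n + 2) ≤ r ^ 2 := pow_le_pow_of_le_one hz0.le hz1.le (by omega)
          exact mul_le_mul_of_nonneg_left h3 (mul_nonneg (hd_pos n).le (ha _))
        have hle2 : (∑' n : ℕ, d n * a (n + 2)) * r ^ 2 < (∑' n : ℕ, d n * a (n + 2)) * r := by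
          have : r ^ 2 < r := by nlinarith
          exact mul_lt_mul_of_pos_left this hSig
        have hle3 : (∑' n : ℕ, d n * a (n + 2)) * r ≤ (1 - α) * r :=
          mul_le_mul_of_nonneg_right h2 hz0.le
        linarith
      have hsum_lt : (1 - β) * E + (1 - α) * T < (1 - α) * r := by
        rw [hkeyeq]; exact hlt
      have hTr : T < r := by
        have h7 : 0 ≤ (1 - β) * E := mul_nonneg (by linarith) hE0
        have h8 : (1 - α) * T < (1 - α) * r := by linarith
        exact (mul_lt_mul_iff_right₀ (by linarith : (0:ℝ) < 1 - α)).1 h8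
      -- complex identities
      have hGz : (β : ℂ) * S1 z + (1 - (β : ℂ)) * S2 z
          = ∑' n : ℕ, ((β * c1 n + (1 - β) * a (n + 2) : ℝ) : ℂ) * z ^ (n + 2) := by
        rw [hS1, hS2]
        simp only
        rw [← tsum_mul_left, ← tsum_mul_left,
          ← Summable.tsum_add (hsumc1.mul_left _) (hsumc2.mul_left _)]
        refine tsum_congr fun n => ?_
        push_cast
        ring
      have hWz : S1 z - S2 z = ∑' n : ℕ, ((c1 n - a (n + 2) : ℝ) : ℂ) * z ^ (n + 2) := by
        rw [hS1, hS2]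
        simp only
        rw [← Summable.tsum_sub hsumc1 hsumc2]
        refine tsum_congr fun n => ?_
        push_cast
        ring
      have hTbound : ‖(β : ℂ) * S1 z + (1 - (β : ℂ)) * S2 z‖ ≤ T := by
        rw [hGz, hT]
        have hsn : Summable (fun n : ℕ =>
            ‖((β * c1 n + (1 - β) * a (n + 2) : ℝ) : ℂ) * z ^ (n + 2)‖) := by
          refine hsumT.congr fun n => ?_
          rw [norm_mul, norm_pow, Complex.norm_real, Real.norm_eq_abs,
            _root_.abs_of_nonneg (hcoefT n), hrdef]
        refine (norm_tsum_le_tsum_norm hsn).trans (le_of_eq ?_)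
        refine tsum_congr fun n => ?_
        rw [norm_mul, norm_pow, Complex.norm_real, Real.norm_eq_abs,
          _root_.abs_of_nonneg (hcoefT n), hrdef]
      have hEbound : ‖S1 z - S2 z‖ ≤ E := by
        rw [hWz, hE]
        have hsn : Summable (fun n : ℕ =>
            ‖((c1 n - a (n + 2) : ℝ) : ℂ) * z ^ (n + 2)‖) := by
          refine hsumE.congr fun n => ?_
          rw [norm_mul, norm_pow, Complex.norm_real, Real.norm_eq_abs,
            _root_.abs_of_nonneg (hcoefE n), hrdef]
        refine (norm_tsum_le_tsum_norm hsn).trans (le_of_eq ?_)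
        refine tsum_congr fun n => ?_
        rw [norm_mul, norm_pow, Complex.norm_real, Real.norm_eq_abs,
          _root_.abs_of_nonneg (hcoefE n), hrdef]
      set sG : ℂ := z - ((β : ℂ) * S1 z + (1 - (β : ℂ)) * S2 z) with hsG
      have hGlow : r - T ≤ ‖sG‖ := by
        rw [hsG]
        calc r - T ≤ ‖z‖ - ‖(β : ℂ) * S1 z + (1 - (β : ℂ)) * S2 z‖ := by
              rw [← hrdef]
              linarith
          _ ≤ ‖z - ((β : ℂ) * S1 z + (1 - (β : ℂ)) * S2 z)‖ := norm_sub_norm_le _ _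
      have hGpos : 0 < ‖sG‖ := lt_of_lt_of_le (by linarith) hGlow
      have hsGne : sG ≠ 0 := norm_pos_iff.1 hGpos
      have hnum : ‖(z - S1 z) - sG‖ ≤ (1 - β) * E := by
        have hid : (z - S1 z) - sG = -((1 - (β : ℂ)) * (S1 z - S2 z)) := by
          rw [hsG]
          ring
        rw [hid, norm_neg, norm_mul]
        have hb : ‖(1 - (β : ℂ))‖ = 1 - β := by
          rw [show (1 - (β : ℂ)) = ((1 - β : ℝ) : ℂ) by push_cast; ring,
            Complex.norm_real, Real.norm_eq_abs, _root_.abs_of_nonneg (by linarith)]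
        rw [hb]
        exact mul_le_mul_of_nonneg_left hEbound (by linarith)
      have hstrict : ‖(z - S1 z) - sG‖ < (1 - α) * ‖sG‖ := by
        have hc : (1 - β) * E < (1 - α) * (r - T) := by
          have h9 : (1 - α) * (r - T) = (1 - α) * r - (1 - α) * T := by ring
          linarith
        calc ‖(z - S1 z) - sG‖ ≤ (1 - β) * E := hnum
          _ < (1 - α) * (r - T) := hc
          _ ≤ (1 - α) * ‖sG‖ := mul_le_mul_of_nonneg_left hGlow (by linarith)
      set w : ℂ := ((z - S1 z) - sG) / sG with hw
      have hsplit : (z - S1 z) / sG = 1 + w := by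
        rw [hw]
        field_simp
        ring
      rw [hsplit, Complex.add_re, Complex.one_re]
      have hwnorm : ‖w‖ < 1 - α := by
        rw [hw, norm_div, div_lt_iff₀ hGpos]
        exact hstrict
      have hwre : -‖w‖ ≤ w.re := by
        have h5 := Complex.abs_re_le_norm w
        have h6 := neg_abs_le w.re
        linarith [abs_le.1 h5]
      linarith
end

section
/- A function f(z) = z - Σ_{n≥2} a_n z^n with a_n ≥ 0 satisfies Re[ (f'(z) + z f''(z)) / (f'(z) + β z f''(z)) ] > α for all z ∈ U if and only if Σ_{n≥2} n(n-α-(n-1)αβ) a_n ≤ 1-α. -/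
open Complex

namespace Stmt8Aux

/-- geometric-type summability -/
lemma summable_sq_geom {x : ℝ} (h0 : 0 ≤ x) (h1 : x < 1) :
    Summable (fun n : ℕ => ((n : ℝ) + 2) ^ 2 * x ^ n) := by
  have hx : ‖x‖ < 1 := by rwa [Real.norm_eq_abs, _root_.abs_of_nonneg h0]
  have h2 := summable_pow_mul_geometric_of_norm_lt_one 2 hx
  have h1' := summable_pow_mul_geometric_of_norm_lt_one 1 hx
  have h0' := summable_pow_mul_geometric_of_norm_lt_one 0 hx
  have := (h2.add ((h1'.mul_left 4).add (h0'.mul_left 4)))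
  refine this.congr fun n => ?_
  push_cast
  ring

/-- master summability -/
lemma master {a : ℕ → ℝ} (ha : ∀ n, 0 ≤ a n)
    (hS : ∀ r : ℝ, 0 ≤ r → r < 1 → Summable fun n : ℕ => a (n + 2) * r ^ (n + 2))
    {r : ℝ} (hr0 : 0 ≤ r) (hr1 : r < 1) :
    Summable fun n : ℕ => ((n : ℝ) + 2) ^ 2 * a (n + 2) * r ^ n := by
  obtain ⟨t, ht0, hrt, ht1⟩ : ∃ t : ℝ, 0 < t ∧ r < t ∧ t < 1 :=
    ⟨(1 + r) / 2, by constructor <;> [linarith; constructor <;> linarith]⟩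
  have hsum := hS t ht0.le ht1
  have hb : ∃ C : ℝ, ∀ n, a (n + 2) * t ^ (n + 2) ≤ C := by
    obtain ⟨C, hC⟩ := (hsum.tendsto_atTop_zero.bddAbove_range)
    exact ⟨C, fun n => hC (Set.mem_range_self n)⟩
  obtain ⟨C, hC⟩ := hb
  have hC0 : 0 ≤ C := le_trans (mul_nonneg (ha 2) (pow_pos ht0 2).le) (hC 0)
  have hsum2 : Summable (fun n : ℕ => C / t ^ 2 * (((n : ℝ) + 2) ^ 2 * (r / t) ^ n)) :=
    (summable_sq_geom (div_nonneg hr0 ht0.le) (by rw [div_lt_one ht0]; exact hrt)).mul_left _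
  refine hsum2.of_nonneg_of_le (fun n => mul_nonneg (mul_nonneg (by positivity) (ha _)) (pow_nonneg hr0 n)) (fun n => ?_)
  have ha' : a (n + 2) ≤ C / t ^ (n + 2) := by
    rw [le_div_iff₀ (pow_pos ht0 _)]
    exact hC n
  have h1 : ((n : ℝ) + 2) ^ 2 * a (n + 2) * r ^ n ≤ ((n : ℝ) + 2) ^ 2 * (C / t ^ (n + 2)) * r ^ n :=
    mul_le_mul_of_nonneg_right (mul_le_mul_of_nonneg_left ha' (by positivity)) (pow_nonneg hr0 n)
  refine h1.trans (le_of_eq ?_)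
  have ht : t ≠ 0 := ht0.ne'
  rw [div_pow, pow_add]
  field_simp


/-- comparison summability for weighted real series -/
lemma summable_wt {a : ℕ → ℝ} (ha : ∀ n, 0 ≤ a n)
    (hS : ∀ r : ℝ, 0 ≤ r → r < 1 → Summable fun n : ℕ => a (n + 2) * r ^ (n + 2))
    {r : ℝ} (hr0 : 0 ≤ r) (hr1 : r < 1) (c : ℕ → ℝ) (hc0 : ∀ n, 0 ≤ c n)
    (hc : ∀ n, c n ≤ ((n : ℝ) + 2) ^ 2) :
    Summable fun n : ℕ => c n * a (n + 2) * r ^ n := by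
  refine (master ha hS hr0 hr1).of_nonneg_of_le
    (fun n => mul_nonneg (mul_nonneg (hc0 n) (ha _)) (pow_nonneg hr0 n)) (fun n => ?_)
  exact mul_le_mul_of_nonneg_right (mul_le_mul_of_nonneg_right (hc n) (ha _)) (pow_nonneg hr0 n)

noncomputable def g1 (a : ℕ → ℝ) (z : ℂ) : ℂ :=
  ∑' n : ℕ, ((n : ℂ) + 2) * (a (n + 2) : ℂ) * z ^ (n + 1)

noncomputable def g2 (a : ℕ → ℝ) (z : ℂ) : ℂ :=
  ∑' n : ℕ, ((n : ℂ) + 2) * ((n : ℂ) + 1) * (a (n + 2) : ℂ) * z ^ n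

lemma hasDerivAt_g0 {a : ℕ → ℝ} (ha : ∀ n, 0 ≤ a n)
    (hS : ∀ r : ℝ, 0 ≤ r → r < 1 → Summable fun n : ℕ => a (n + 2) * r ^ (n + 2))
    {z : ℂ} (hz : ‖z‖ < 1) :
    HasDerivAt (fun w : ℂ => ∑' n : ℕ, (a (n + 2) : ℂ) * w ^ (n + 2)) (g1 a z) z := by
  obtain ⟨t, ht0, hzt, ht1⟩ : ∃ t : ℝ, 0 < t ∧ ‖z‖ < t ∧ t < 1 :=
    ⟨(1 + ‖z‖) / 2, by refine ⟨by positivity, by linarith, by linarith⟩⟩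
  have husum : Summable (fun n : ℕ => ((n : ℝ) + 2) * a (n + 2) * t ^ (n + 1)) := by
    have := (summable_wt ha hS ht0.le ht1 (fun n => ((n : ℝ) + 2)) (fun n => by positivity)
      (fun n => by show ((n:ℝ)+2) ≤ ((n:ℝ)+2)^2; nlinarith [Nat.cast_nonneg (α := ℝ) n])).mul_left t
    refine this.congr fun n => ?_
    rw [pow_succ]; ring
  have key := hasDerivAt_tsum_of_isPreconnected husum
    (Metric.isOpen_ball (x := (0:ℂ)) (ε := t)) ((convex_ball (0:ℂ) t).isPreconnected)
    (g := fun (n : ℕ) (w : ℂ) => (a (n + 2) : ℂ) * w ^ (n + 2))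
    (g' := fun (n : ℕ) (w : ℂ) => ((n : ℂ) + 2) * (a (n + 2) : ℂ) * w ^ (n + 1))
    (fun (n : ℕ) (w : ℂ) _ => by
      have h := (hasDerivAt_pow (n + 2) w).const_mul ((a (n + 2) : ℂ))
      refine h.congr_deriv ?_
      push_cast
      ring)
    (fun (n : ℕ) (w : ℂ) hw => by
      rw [mem_ball_zero_iff] at hw
      have : ‖((n : ℂ) + 2) * (a (n + 2) : ℂ) * w ^ (n + 1)‖
          = ((n : ℝ) + 2) * a (n + 2) * ‖w‖ ^ (n + 1) := by
        rw [norm_mul, norm_mul, norm_pow]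
        congr 2
        · rw [show ((n : ℂ) + 2) = ((((n:ℝ) + 2) : ℝ) : ℂ) by push_cast; ring,
            Complex.norm_real, Real.norm_eq_abs, _root_.abs_of_nonneg (by positivity)]
        · rw [Complex.norm_real, Real.norm_eq_abs, _root_.abs_of_nonneg (ha _)]
      rw [this]
      exact mul_le_mul_of_nonneg_left (pow_le_pow_left₀ (norm_nonneg w) hw.le _)
        (mul_nonneg (by positivity) (ha _)))
    (Metric.mem_ball_self ht0)
    (by
      refine summable_zero.congr fun n => ?_
      simp)
    (mem_ball_zero_iff.2 hzt)
  exact key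

lemma hasDerivAt_g1 {a : ℕ → ℝ} (ha : ∀ n, 0 ≤ a n)
    (hS : ∀ r : ℝ, 0 ≤ r → r < 1 → Summable fun n : ℕ => a (n + 2) * r ^ (n + 2))
    {z : ℂ} (hz : ‖z‖ < 1) :
    HasDerivAt (g1 a) (g2 a z) z := by
  obtain ⟨t, ht0, hzt, ht1⟩ : ∃ t : ℝ, 0 < t ∧ ‖z‖ < t ∧ t < 1 :=
    ⟨(1 + ‖z‖) / 2, by refine ⟨by positivity, by linarith, by linarith⟩⟩
  have husum : Summable (fun n : ℕ => (((n : ℝ) + 2) * ((n : ℝ) + 1)) * a (n + 2) * t ^ n) :=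
    summable_wt ha hS ht0.le ht1 _ (fun n => by positivity)
      (fun n => by show ((n:ℝ)+2)*((n:ℝ)+1) ≤ ((n:ℝ)+2)^2; nlinarith [Nat.cast_nonneg (α := ℝ) n])
  have key := hasDerivAt_tsum_of_isPreconnected husum
    (Metric.isOpen_ball (x := (0:ℂ)) (ε := t)) ((convex_ball (0:ℂ) t).isPreconnected)
    (g := fun (n : ℕ) (w : ℂ) => ((n : ℂ) + 2) * (a (n + 2) : ℂ) * w ^ (n + 1))
    (g' := fun (n : ℕ) (w : ℂ) => ((n : ℂ) + 2) * ((n : ℂ) + 1) * (a (n + 2) : ℂ) * w ^ n)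
    (fun (n : ℕ) (w : ℂ) _ => by
      have h := (hasDerivAt_pow (n + 1) w).const_mul (((n : ℂ) + 2) * (a (n + 2) : ℂ))
      refine h.congr_deriv ?_
      push_cast
      ring)
    (fun (n : ℕ) (w : ℂ) hw => by
      rw [mem_ball_zero_iff] at hw
      have : ‖((n : ℂ) + 2) * ((n : ℂ) + 1) * (a (n + 2) : ℂ) * w ^ n‖
          = (((n : ℝ) + 2) * ((n : ℝ) + 1)) * a (n + 2) * ‖w‖ ^ n := by
        rw [norm_mul, norm_mul, norm_mul, norm_pow]
        congr 3
        · rw [show ((n : ℂ) + 2) = ((((n:ℝ) + 2) : ℝ) : ℂ) by push_cast; ring,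
            Complex.norm_real, Real.norm_eq_abs, _root_.abs_of_nonneg (by positivity)]
        · rw [show ((n : ℂ) + 1) = ((((n:ℝ) + 1) : ℝ) : ℂ) by push_cast; ring,
            Complex.norm_real, Real.norm_eq_abs, _root_.abs_of_nonneg (by positivity)]
        · rw [Complex.norm_real, Real.norm_eq_abs, _root_.abs_of_nonneg (ha _)]
      rw [this]
      exact mul_le_mul_of_nonneg_left (pow_le_pow_left₀ (norm_nonneg w) hw.le _)
        (mul_nonneg (by positivity) (ha _)))
    (Metric.mem_ball_self ht0)
    (by
      refine summable_zero.congr fun n => ?_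
      simp)
    (mem_ball_zero_iff.2 hzt)
  exact key


noncomputable def t1 (a : ℕ → ℝ) (r : ℝ) : ℝ := ∑' n : ℕ, ((n : ℝ) + 2) * a (n + 2) * r ^ (n + 1)

noncomputable def t2 (a : ℕ → ℝ) (r : ℝ) : ℝ :=
  ∑' n : ℕ, ((n : ℝ) + 2) * ((n : ℝ) + 1) * a (n + 2) * r ^ n

lemma g1_real (a : ℕ → ℝ) (r : ℝ) : g1 a (r : ℂ) = ((t1 a r : ℝ) : ℂ) := by
  rw [t1, Complex.ofReal_tsum]
  exact tsum_congr fun n => by push_cast; ring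

lemma g2_real (a : ℕ → ℝ) (r : ℝ) : g2 a (r : ℂ) = ((t2 a r : ℝ) : ℂ) := by
  rw [t2, Complex.ofReal_tsum]
  exact tsum_congr fun n => by push_cast; ring

lemma norm_term1 {a : ℕ → ℝ} (ha : ∀ n, 0 ≤ a n) (z : ℂ) (n : ℕ) :
    ‖((n : ℂ) + 2) * (a (n + 2) : ℂ) * z ^ (n + 1)‖
      = ((n : ℝ) + 2) * a (n + 2) * ‖z‖ ^ (n + 1) := by
  rw [norm_mul, norm_mul, norm_pow]
  congr 2
  · rw [show ((n : ℂ) + 2) = ((((n : ℝ) + 2) : ℝ) : ℂ) by push_cast; ring,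
      Complex.norm_real, Real.norm_eq_abs, _root_.abs_of_nonneg (by positivity)]
  · rw [Complex.norm_real, Real.norm_eq_abs, _root_.abs_of_nonneg (ha _)]

lemma norm_term2 {a : ℕ → ℝ} (ha : ∀ n, 0 ≤ a n) (z : ℂ) (n : ℕ) :
    ‖((n : ℂ) + 2) * ((n : ℂ) + 1) * (a (n + 2) : ℂ) * z ^ n‖
      = ((n : ℝ) + 2) * ((n : ℝ) + 1) * a (n + 2) * ‖z‖ ^ n := by
  rw [norm_mul, norm_mul, norm_mul, norm_pow]
  congr 3
  · rw [show ((n : ℂ) + 2) = ((((n : ℝ) + 2) : ℝ) : ℂ) by push_cast; ring,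
      Complex.norm_real, Real.norm_eq_abs, _root_.abs_of_nonneg (by positivity)]
  · rw [show ((n : ℂ) + 1) = ((((n : ℝ) + 1) : ℝ) : ℂ) by push_cast; ring,
      Complex.norm_real, Real.norm_eq_abs, _root_.abs_of_nonneg (by positivity)]
  · rw [Complex.norm_real, Real.norm_eq_abs, _root_.abs_of_nonneg (ha _)]

lemma summable_t1 {a : ℕ → ℝ} (ha : ∀ n, 0 ≤ a n)
    (hS : ∀ r : ℝ, 0 ≤ r → r < 1 → Summable fun n : ℕ => a (n + 2) * r ^ (n + 2))
    {r : ℝ} (hr0 : 0 ≤ r) (hr1 : r < 1) :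
    Summable fun n : ℕ => ((n : ℝ) + 2) * a (n + 2) * r ^ (n + 1) := by
  have := (summable_wt ha hS hr0 hr1 (fun n => ((n : ℝ) + 2)) (fun n => by positivity)
    (fun n => by show ((n:ℝ)+2) ≤ ((n:ℝ)+2)^2; nlinarith [Nat.cast_nonneg (α := ℝ) n])).mul_left r
  refine this.congr fun n => ?_
  rw [pow_succ]; ring

lemma summable_t2 {a : ℕ → ℝ} (ha : ∀ n, 0 ≤ a n)
    (hS : ∀ r : ℝ, 0 ≤ r → r < 1 → Summable fun n : ℕ => a (n + 2) * r ^ (n + 2))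
    {r : ℝ} (hr0 : 0 ≤ r) (hr1 : r < 1) :
    Summable fun n : ℕ => ((n : ℝ) + 2) * ((n : ℝ) + 1) * a (n + 2) * r ^ n :=
  summable_wt ha hS hr0 hr1 _ (fun n => by positivity)
    (fun n => by show ((n:ℝ)+2)*((n:ℝ)+1) ≤ ((n:ℝ)+2)^2; nlinarith [Nat.cast_nonneg (α := ℝ) n])

lemma summable_t2' {a : ℕ → ℝ} (ha : ∀ n, 0 ≤ a n)
    (hS : ∀ r : ℝ, 0 ≤ r → r < 1 → Summable fun n : ℕ => a (n + 2) * r ^ (n + 2))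
    {r : ℝ} (hr0 : 0 ≤ r) (hr1 : r < 1) :
    Summable fun n : ℕ => ((n : ℝ) + 2) * ((n : ℝ) + 1) * a (n + 2) * r ^ (n + 1) := by
  have := (summable_t2 ha hS hr0 hr1).mul_left r
  refine this.congr fun n => ?_
  rw [pow_succ]; ring

lemma g1_norm_le {a : ℕ → ℝ} (ha : ∀ n, 0 ≤ a n)
    (hS : ∀ r : ℝ, 0 ≤ r → r < 1 → Summable fun n : ℕ => a (n + 2) * r ^ (n + 2))
    {z : ℂ} (hz : ‖z‖ < 1) : ‖g1 a z‖ ≤ t1 a ‖z‖ := by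
  have hsum : Summable fun n : ℕ => ‖((n : ℂ) + 2) * (a (n + 2) : ℂ) * z ^ (n + 1)‖ :=
    (summable_t1 ha hS (norm_nonneg z) hz).congr fun n => (norm_term1 ha z n).symm
  refine le_trans (norm_tsum_le_tsum_norm hsum) (le_of_eq ?_)
  exact tsum_congr fun n => norm_term1 ha z n

lemma g2_norm_le {a : ℕ → ℝ} (ha : ∀ n, 0 ≤ a n)
    (hS : ∀ r : ℝ, 0 ≤ r → r < 1 → Summable fun n : ℕ => a (n + 2) * r ^ (n + 2))
    {z : ℂ} (hz : ‖z‖ < 1) : ‖g2 a z‖ ≤ t2 a ‖z‖ := by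
  have hsum : Summable fun n : ℕ => ‖((n : ℂ) + 2) * ((n : ℂ) + 1) * (a (n + 2) : ℂ) * z ^ n‖ :=
    (summable_t2 ha hS (norm_nonneg z) hz).congr fun n => (norm_term2 ha z n).symm
  refine le_trans (norm_tsum_le_tsum_norm hsum) (le_of_eq ?_)
  exact tsum_congr fun n => norm_term2 ha z n

lemma t1_zero (a : ℕ → ℝ) : t1 a 0 = 0 := by
  rw [t1]
  convert tsum_zero with n
  simp

end Stmt8Aux

set_option maxHeartbeats 2000000 in
open Stmt8Aux in
theorem stmt8 (α β : ℝ) (hα0 : 0 ≤ α) (hα1 : α < 1) (hβ0 : 0 ≤ β) (hβ1 : β < 1)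
    (f : ℂ → ℂ) (a : ℕ → ℝ) (ha : ∀ n, 0 ≤ a n)
    (hf : ∀ z ∈ Metric.ball (0 : ℂ) 1,
      HasSum (fun n : ℕ => ((a (n + 2) : ℝ) : ℂ) * z ^ (n + 2)) (z - f z)) :
    (∀ z ∈ Metric.ball (0 : ℂ) 1,
      α < (((deriv f z + z * deriv (deriv f) z) /
        (deriv f z + (β : ℂ) * z * deriv (deriv f) z)).re)) ↔
    (Summable (fun n : ℕ =>
      ((n : ℝ) + 2) * (((n : ℝ) + 2) - α - ((n : ℝ) + 1) * α * β) * a (n + 2)) ∧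
    ∑' n : ℕ,
      ((n : ℝ) + 2) * (((n : ℝ) + 2) - α - ((n : ℝ) + 1) * α * β) * a (n + 2) ≤ 1 - α) := by
  classical
  set s : ℕ → ℝ := fun n =>
    ((n : ℝ) + 2) * (((n : ℝ) + 2) - α - ((n : ℝ) + 1) * α * β) * a (n + 2) with hsdef
  have hs0 : ∀ n, 0 ≤ s n := by
    intro n
    have hn : (0:ℝ) ≤ (n:ℝ) := Nat.cast_nonneg n
    have h1 : ((n : ℝ) + 1) * α * β ≤ ((n : ℝ) + 1) * α := by
      have := mul_nonneg (mul_nonneg (by linarith : (0:ℝ) ≤ (n:ℝ) + 1) hα0)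
        (by linarith : (0:ℝ) ≤ 1 - β)
      nlinarith
    have h2 : α + ((n : ℝ) + 1) * α ≤ ((n : ℝ) + 2) := by nlinarith
    exact mul_nonneg (mul_nonneg (by linarith) (by linarith)) (ha _)
  have hS : ∀ r : ℝ, 0 ≤ r → r < 1 → Summable fun n : ℕ => a (n + 2) * r ^ (n + 2) := by
    intro r hr0 hr1
    have hball : (r : ℂ) ∈ Metric.ball (0 : ℂ) 1 := by
      rw [mem_ball_zero_iff, Complex.norm_real, Real.norm_eq_abs, _root_.abs_of_nonneg hr0]
      exact hr1
    have h := (hf _ hball).summable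
    have h2 : Summable fun n : ℕ => ((a (n + 2) * r ^ (n + 2) : ℝ) : ℂ) :=
      h.congr fun n => by push_cast; ring
    exact Complex.summable_ofReal.mp h2
  have hderiv : ∀ z ∈ Metric.ball (0 : ℂ) 1,
      deriv f z = 1 - g1 a z ∧ deriv (deriv f) z = - g2 a z := by
    intro z hz
    have hfe : ∀ w ∈ Metric.ball (0 : ℂ) 1,
        f w = w - ∑' n : ℕ, (a (n + 2) : ℂ) * w ^ (n + 2) := by
      intro w hw
      have := (hf w hw).tsum_eq
      rw [this]; ring
    have hd1 : ∀ w ∈ Metric.ball (0 : ℂ) 1, HasDerivAt f (1 - g1 a w) w := by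
      intro w hw
      have hball : Metric.ball (0 : ℂ) 1 ∈ nhds w := Metric.isOpen_ball.mem_nhds hw
      have heq : f =ᶠ[nhds w] fun u => u - ∑' n : ℕ, (a (n + 2) : ℂ) * u ^ (n + 2) :=
        Filter.eventuallyEq_of_mem hball hfe
      have hd : HasDerivAt (fun u : ℂ => u - ∑' n : ℕ, (a (n + 2) : ℂ) * u ^ (n + 2))
          (1 - g1 a w) w :=
        (hasDerivAt_id w).sub (hasDerivAt_g0 ha hS (mem_ball_zero_iff.mp hw))
      exact hd.congr_of_eventuallyEq heq
    have h1 : deriv f z = 1 - g1 a z := (hd1 z hz).deriv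
    refine ⟨h1, ?_⟩
    have hball : Metric.ball (0 : ℂ) 1 ∈ nhds z := Metric.isOpen_ball.mem_nhds hz
    have heq : deriv f =ᶠ[nhds z] fun u => 1 - g1 a u :=
      Filter.eventuallyEq_of_mem hball fun w hw => (hd1 w hw).deriv
    have hd : HasDerivAt (fun u : ℂ => 1 - g1 a u) (0 - g2 a z) z :=
      (hasDerivAt_const z 1).sub (hasDerivAt_g1 ha hS (mem_ball_zero_iff.mp hz))
    have := (hd.congr_of_eventuallyEq heq).deriv
    rw [this]; ring
  constructor
  · intro h
    have hreal : ∀ r : ℝ, 0 ≤ r → r < 1 →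
        α < (1 - t1 a r - r * t2 a r) / (1 - t1 a r - β * (r * t2 a r)) := by
      intro r hr0 hr1
      have hball : (r : ℂ) ∈ Metric.ball (0 : ℂ) 1 := by
        rw [mem_ball_zero_iff, Complex.norm_real, Real.norm_eq_abs, _root_.abs_of_nonneg hr0]
        exact hr1
      have hh := h _ hball
      obtain ⟨h1, h2⟩ := hderiv _ hball
      rw [h1, h2, g1_real, g2_real] at hh
      have e : ((1 - ((t1 a r:ℝ):ℂ) + (r:ℂ) * -((t2 a r:ℝ):ℂ)) /
          (1 - ((t1 a r:ℝ):ℂ) + (β:ℂ) * (r:ℂ) * -((t2 a r:ℝ):ℂ))).re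
          = (1 - t1 a r - r * t2 a r) / (1 - t1 a r - β * (r * t2 a r)) := by
        rw [show (1 - ((t1 a r:ℝ):ℂ) + (r:ℂ) * -((t2 a r:ℝ):ℂ))
            = (((1 - t1 a r - r * t2 a r : ℝ)) : ℂ) by push_cast; ring,
          show (1 - ((t1 a r:ℝ):ℂ) + (β:ℂ) * (r:ℂ) * -((t2 a r:ℝ):ℂ))
            = (((1 - t1 a r - β * (r * t2 a r) : ℝ)) : ℂ) by push_cast; ring,
          ← Complex.ofReal_div, Complex.ofReal_re]
      rwa [e] at hh
    set D : ℝ → ℝ := fun r => 1 - t1 a r - β * (r * t2 a r) with hDdef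
    have hDne : ∀ r : ℝ, 0 ≤ r → r < 1 → D r ≠ 0 := by
      intro r hr0 hr1 h0
      have hlt := hreal r hr0 hr1
      rw [show (1 - t1 a r - β * (r * t2 a r)) = D r from rfl, h0, div_zero] at hlt
      exact absurd hlt (not_lt.mpr hα0)
    have hDpos : ∀ r : ℝ, 0 ≤ r → r < 1 → 0 < D r := by
      intro r hr0 hr1
      rcases Ne.lt_or_gt (hDne r hr0 hr1) with hneg | hpos
      · exfalso
        have hc1 : ContinuousOn (t1 a) (Set.Icc 0 r) := by
          refine continuousOn_tsum (fun n => Continuous.continuousOn (continuous_const.mul (continuous_pow _)))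
            (summable_t1 ha hS hr0 hr1) (fun n x hx => ?_)
          rw [Real.norm_eq_abs, _root_.abs_of_nonneg
            (mul_nonneg (mul_nonneg (by positivity) (ha _)) (pow_nonneg hx.1 _))]
          exact mul_le_mul_of_nonneg_left (pow_le_pow_left₀ hx.1 hx.2 _)
            (mul_nonneg (by positivity) (ha _))
        have hc2 : ContinuousOn (t2 a) (Set.Icc 0 r) := by
          refine continuousOn_tsum (fun n => Continuous.continuousOn (continuous_const.mul (continuous_pow _)))
            (summable_t2 ha hS hr0 hr1) (fun n x hx => ?_)
          rw [Real.norm_eq_abs, _root_.abs_of_nonneg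
            (mul_nonneg (mul_nonneg (by positivity) (ha _)) (pow_nonneg hx.1 _))]
          exact mul_le_mul_of_nonneg_left (pow_le_pow_left₀ hx.1 hx.2 _)
            (mul_nonneg (by positivity) (ha _))
        have hcont : ContinuousOn D (Set.Icc 0 r) := by
          simp only [hDdef]
          exact (continuousOn_const.sub hc1).sub
            (continuousOn_const.mul (continuousOn_id.mul hc2))
        have hD0 : D 0 = 1 := by
          simp only [hDdef]
          rw [t1_zero]
          ring
        have hmem : (0:ℝ) ∈ Set.Icc (D r) (D 0) := by
          rw [hD0]; exact ⟨hneg.le, zero_le_one⟩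
        obtain ⟨r₁, hr₁mem, hr₁⟩ := intermediate_value_Icc' hr0 hcont hmem
        exact hDne r₁ hr₁mem.1 (lt_of_le_of_lt hr₁mem.2 hr1) hr₁
      · exact hpos
    have hpartial : ∀ M : ℕ, ∑ n ∈ Finset.range M, s n ≤ 1 - α := by
      intro M
      have hbnd : ∀ r : ℝ, 0 ≤ r → r < 1 →
          ∑ n ∈ Finset.range M, s n * r ^ (n+1) ≤ 1 - α := by
        intro r hr0 hr1
        have hlt := hreal r hr0 hr1
        have hD := hDpos r hr0 hr1
        rw [hDdef] at hD
        rw [lt_div_iff₀ hD] at hlt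
        have hlt' : α * (1 - t1 a r - β * (r * t2 a r)) < 1 - t1 a r - r * t2 a r := hlt
        have key : (1-α) * t1 a r + (1 - α*β) * (r * t2 a r) < 1 - α := by nlinarith [hlt']
        have hA : ∑ n ∈ Finset.range M, ((n:ℝ)+2) * a (n+2) * r^(n+1) ≤ t1 a r :=
          Summable.sum_le_tsum _ (fun n _ => mul_nonneg (mul_nonneg (by positivity) (ha _))
            (pow_nonneg hr0 _)) (summable_t1 ha hS hr0 hr1)
        have hB : ∑ n ∈ Finset.range M, ((n:ℝ)+2) * ((n:ℝ)+1) * a (n+2) * r^(n+1)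
            ≤ r * t2 a r := by
          have hBeq : r * t2 a r = ∑' n : ℕ, ((n:ℝ)+2)*((n:ℝ)+1)*a (n+2)*r^(n+1) := by
            rw [t2, ← tsum_mul_left]
            exact tsum_congr fun n => by rw [pow_succ]; ring
          rw [hBeq]
          exact Summable.sum_le_tsum _ (fun n _ => mul_nonneg (mul_nonneg (by positivity) (ha _))
            (pow_nonneg hr0 _)) (summable_t2' ha hS hr0 hr1)
        have hsum_eq : ∑ n ∈ Finset.range M, s n * r^(n+1)
            = (1-α) * ∑ n ∈ Finset.range M, ((n:ℝ)+2)*a (n+2)*r^(n+1)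
              + (1-α*β) * ∑ n ∈ Finset.range M, ((n:ℝ)+2)*((n:ℝ)+1)*a (n+2)*r^(n+1) := by
          rw [Finset.mul_sum, Finset.mul_sum, ← Finset.sum_add_distrib]
          exact Finset.sum_congr rfl fun n _ => by simp only [hsdef]; ring
        have h1α : (0:ℝ) ≤ 1 - α := by linarith
        have h1αβ : (0:ℝ) ≤ 1 - α*β := by nlinarith
        rw [hsum_eq]
        refine le_trans (add_le_add (mul_le_mul_of_nonneg_left hA h1α)
          (mul_le_mul_of_nonneg_left hB h1αβ)) key.le
      have hcontp : Filter.Tendsto (fun r : ℝ => ∑ n ∈ Finset.range M, s n * r ^ (n+1))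
          (nhdsWithin 1 (Set.Iio 1)) (nhds (∑ n ∈ Finset.range M, s n * (1:ℝ) ^ (n+1))) :=
        ((continuous_finset_sum _ (fun n _ => continuous_const.mul (continuous_pow _))).tendsto 1).mono_left
          nhdsWithin_le_nhds
      have hev : ∀ᶠ r in nhdsWithin (1:ℝ) (Set.Iio 1),
          ∑ n ∈ Finset.range M, s n * r ^ (n+1) ≤ 1 - α := by
        filter_upwards [Ioo_mem_nhdsLT_of_mem
          (show (1:ℝ) ∈ Set.Ioc 0 1 from ⟨zero_lt_one, le_refl 1⟩)] with r hr
        exact hbnd r hr.1.le hr.2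
      have hle := le_of_tendsto hcontp hev
      simpa using hle
    exact ⟨summable_of_sum_range_le hs0 hpartial, Real.tsum_le_of_sum_range_le hs0 hpartial⟩
  · rintro ⟨hsumm, hbound⟩ z hz
    obtain ⟨h1, h2⟩ := hderiv z hz
    rw [h1, h2]
    have hz1 : ‖z‖ < 1 := mem_ball_zero_iff.mp hz
    set r : ℝ := ‖z‖ with hrdef
    have hr0 : 0 ≤ r := norm_nonneg z
    have hr1 : r < 1 := hz1
    set u : ℂ := 1 - g1 a z + z * -g2 a z with hudef
    set v : ℂ := 1 - g1 a z + (β:ℂ) * z * -g2 a z with hvdef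
    set A : ℝ := t1 a r with hAdef
    set B2 : ℝ := t2 a r with hB2def
    have hA0 : 0 ≤ A := tsum_nonneg fun n =>
      mul_nonneg (mul_nonneg (by positivity) (ha _)) (pow_nonneg hr0 _)
    have hB20 : 0 ≤ B2 := tsum_nonneg fun n =>
      mul_nonneg (mul_nonneg (by positivity) (ha _)) (pow_nonneg hr0 _)
    have hg1 : ‖g1 a z‖ ≤ A := g1_norm_le ha hS hz1
    have hg2 : ‖g2 a z‖ ≤ B2 := g2_norm_le ha hS hz1
    set σ : ℝ := ∑' n, s n with hσdef
    have hσ0 : 0 ≤ σ := tsum_nonneg hs0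
    have hsumσr : Summable (fun n : ℕ => s n * r ^ (n+1)) := by
      have hc0 : ∀ n : ℕ, 0 ≤ ((n:ℝ)+2) * (((n:ℝ)+2) - α - ((n:ℝ)+1)*α*β) := by
        intro n
        have hn : (0:ℝ) ≤ (n:ℝ) := Nat.cast_nonneg n
        have hh1 : ((n : ℝ) + 1) * α * β ≤ ((n : ℝ) + 1) * α := by
          have := mul_nonneg (mul_nonneg (by linarith : (0:ℝ) ≤ (n:ℝ) + 1) hα0)
            (by linarith : (0:ℝ) ≤ 1 - β)
          nlinarith
        have hh2 : α + ((n : ℝ) + 1) * α ≤ ((n : ℝ) + 2) := by nlinarith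
        have hin : (0:ℝ) ≤ (n:ℝ) + 2 - α - ((n:ℝ)+1)*α*β := by linarith
        exact mul_nonneg (by linarith) hin
      have hcb : ∀ n : ℕ, ((n:ℝ)+2) * (((n:ℝ)+2) - α - ((n:ℝ)+1)*α*β) ≤ ((n:ℝ)+2)^2 := by
        intro n
        have hn : (0:ℝ) ≤ (n:ℝ) := Nat.cast_nonneg n
        have := mul_nonneg (mul_nonneg (by linarith : (0:ℝ) ≤ (n:ℝ) + 1) hα0) hβ0
        nlinarith
      have := (summable_wt ha hS hr0 hr1 _ hc0 hcb).mul_left r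
      refine this.congr fun n => ?_
      simp only [hsdef]
      rw [pow_succ]; ring
    have hkey : ∑' n : ℕ, s n * r^(n+1) = (1-α) * A + (1-α*β) * (r * B2) := by
      have hrB : r * B2 = ∑' n : ℕ, ((n:ℝ)+2)*((n:ℝ)+1)*a (n+2)*r^(n+1) := by
        rw [hB2def, t2, ← tsum_mul_left]
        exact tsum_congr fun n => by rw [pow_succ]; ring
      rw [hAdef, t1, hrB, ← tsum_mul_left, ← tsum_mul_left,
        ← Summable.tsum_add ((summable_t1 ha hS hr0 hr1).mul_left _)
          ((summable_t2' ha hS hr0 hr1).mul_left _)]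
      exact tsum_congr fun n => by simp only [hsdef]; ring
    have hσr_le : ∑' n : ℕ, s n * r^(n+1) ≤ r * σ := by
      have hterm : ∀ n : ℕ, s n * r^(n+1) ≤ s n * r := by
        intro n
        refine mul_le_mul_of_nonneg_left ?_ (hs0 n)
        calc r^(n+1) = r^n * r := by rw [pow_succ]
        _ ≤ 1 * r := mul_le_mul_of_nonneg_right (pow_le_one₀ hr0 hr1.le) hr0
        _ = r := one_mul r
      calc ∑' n : ℕ, s n * r^(n+1) ≤ ∑' n : ℕ, s n * r :=
        Summable.tsum_le_tsum hterm hsumσr (hsumm.mul_right r)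
      _ = σ * r := tsum_mul_right
      _ = r * σ := mul_comm _ _
    have hrB20 : 0 ≤ r * B2 := mul_nonneg hr0 hB20
    have hE : A + β * (r * B2) ≤ r := by
      have h3 : (1-α) * (A + β * (r * B2)) ≤ (1-α) * r := by
        have hb1 : (1-α)*β ≤ 1-α*β := by nlinarith
        have h4 : (1-α) * A + (1-α*β) * (r * B2) ≤ r * (1-α) := by
          refine le_trans (le_of_eq hkey.symm) (le_trans hσr_le ?_)
          exact mul_le_mul_of_nonneg_left hbound hr0
        nlinarith
      exact le_of_mul_le_mul_left h3 (by linarith)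
    have hvnorm : 1 - (A + β * (r * B2)) ≤ ‖v‖ := by
      have hn1 : ‖(β:ℂ) * z * g2 a z‖ ≤ β * (r * B2) := by
        rw [norm_mul, norm_mul, Complex.norm_real, Real.norm_eq_abs, _root_.abs_of_nonneg hβ0,
          mul_assoc]
        exact mul_le_mul_of_nonneg_left (mul_le_mul_of_nonneg_left hg2 hr0) hβ0
      have hsum : ‖g1 a z + (β:ℂ) * z * g2 a z‖ ≤ A + β * (r * B2) :=
        le_trans (norm_add_le _ _) (add_le_add hg1 hn1)
      have hveq : v = 1 - (g1 a z + (β:ℂ) * z * g2 a z) := by rw [hvdef]; ring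
      calc 1 - (A + β * (r * B2)) ≤ 1 - ‖g1 a z + (β:ℂ) * z * g2 a z‖ := by linarith
      _ = ‖(1:ℂ)‖ - ‖g1 a z + (β:ℂ) * z * g2 a z‖ := by rw [norm_one]
      _ ≤ ‖1 - (g1 a z + (β:ℂ) * z * g2 a z)‖ := norm_sub_norm_le _ _
      _ = ‖v‖ := by rw [← hveq]
    have hvpos : 0 < ‖v‖ := lt_of_lt_of_le (by linarith) hvnorm
    have hvne : v ≠ 0 := norm_pos_iff.mp hvpos
    have huv : ‖u - v‖ ≤ (1-β) * (r * B2) := by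
      have heq : u - v = ((β:ℂ) - 1) * (z * g2 a z) := by rw [hudef, hvdef]; ring
      rw [heq, norm_mul, norm_mul]
      have hb : ‖(β:ℂ) - 1‖ = 1 - β := by
        rw [show ((β:ℂ) - 1) = (((β - 1 : ℝ)):ℂ) by push_cast; ring, Complex.norm_real,
          Real.norm_eq_abs, abs_of_nonpos (by linarith)]
        ring
      rw [hb]
      exact mul_le_mul_of_nonneg_left (mul_le_mul_of_nonneg_left hg2 hr0) (by linarith)
    have hstrict : ‖u - v‖ < (1-α) * ‖v‖ := by
      have he1 : (1-β)*(r*B2) = (∑' n : ℕ, s n * r^(n+1)) - (1-α)*(A + β*(r*B2)) := by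
        rw [hkey]; ring
      have he2 : ∑' n : ℕ, s n * r^(n+1) ≤ r * (1-α) :=
        le_trans hσr_le (mul_le_mul_of_nonneg_left hbound hr0)
      calc ‖u - v‖ ≤ (1-β)*(r*B2) := huv
      _ ≤ (1-α) * (r - (A + β*(r*B2))) := by nlinarith
      _ < (1-α) * (1 - (A + β*(r*B2))) :=
        mul_lt_mul_of_pos_left (by linarith) (by linarith)
      _ ≤ (1-α) * ‖v‖ := mul_le_mul_of_nonneg_left hvnorm (by linarith)
    have hdiv : ‖u/v - 1‖ < 1 - α := by
      rw [show u/v - 1 = (u - v)/v by field_simp, norm_div]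
      rw [div_lt_iff₀ hvpos]
      linarith [hstrict]
    have hre : 1 - ‖u/v - 1‖ ≤ (u/v).re := by
      have habs := Complex.abs_re_le_norm (u/v - 1)
      have hre1 : (u/v - 1).re = (u/v).re - 1 := by
        rw [Complex.sub_re, Complex.one_re]
      have := (abs_le.mp habs).1
      linarith [this, hre1.ge, hre1.le]
    linarith [hre, hdiv]
end

section
/- A function f(z) = z - Σ_{n≥2} a_n z^n with a_n ≥ 0 is convex of order α (i.e., Re(1 + z f''(z)/f'(z)) > α on U) if and only if Σ_{n≥2} n(n-α) a_n ≤ 1-α. -/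
open Complex Topology Filter

private lemma keySummable (a : ℕ → ℝ) (ha : ∀ n, 0 ≤ a n)
    (hs : ∀ r : ℝ, 0 ≤ r → r < 1 → Summable fun n => a (n + 2) * r ^ n)
    {r : ℝ} (hr0 : 0 ≤ r) (hr1 : r < 1) :
    Summable (fun n : ℕ => ((n : ℝ) + 2) ^ 2 * a (n + 2) * r ^ n) := by
  rcases eq_or_lt_of_le hr0 with h0 | h0
  · apply summable_of_ne_finset_zero (s := {0})
    intro n hn
    simp only [Finset.mem_singleton] at hn
    rw [← h0, zero_pow hn, mul_zero]
  set ρ := (r + 1) / 2 with hρ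
  have hρ0 : 0 < ρ := by positivity
  have hρ1 : ρ < 1 := by rw [hρ]; linarith
  have hrρ : r < ρ := by rw [hρ]; linarith
  obtain ⟨C, hC⟩ := ((hs ρ hρ0.le hρ1).tendsto_atTop_zero).bddAbove_range
  simp only [mem_upperBounds, Set.mem_range, forall_exists_index] at hC
  have hx0 : 0 < r / ρ := by positivity
  have hx1 : r / ρ < 1 := (div_lt_one hρ0).2 hrρ
  have hx1' : ‖r / ρ‖ < 1 := by rwa [Real.norm_eq_abs, _root_.abs_of_nonneg hx0.le]
  have hsum : Summable (fun n : ℕ => C * (((n : ℝ) + 2) ^ 2 * (r / ρ) ^ n)) := by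
    apply Summable.mul_left
    have h1 := summable_pow_mul_geometric_of_norm_lt_one (R := ℝ) 2 hx1'
    have h2 := summable_pow_mul_geometric_of_norm_lt_one (R := ℝ) 1 hx1'
    have h3 := summable_geometric_of_norm_lt_one (x := (r/ρ)) hx1'
    have := (h1.add ((h2.mul_left 4))).add (h3.mul_left 4)
    apply this.congr
    intro n
    ring
  apply hsum.of_nonneg_of_le
  · intro n
    have := ha (n+2)
    positivity
  · intro n
    have h1 : a (n + 2) * ρ ^ n ≤ C := hC _ n rfl
    have h2 : ((n : ℝ) + 2) ^ 2 * a (n + 2) * r ^ n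
        = ((n : ℝ) + 2) ^ 2 * (r / ρ) ^ n * (a (n + 2) * ρ ^ n) := by
      field_simp
      rw [mul_assoc, ← mul_pow, div_mul_cancel₀ r hρ0.ne']
    rw [h2]
    calc ((n : ℝ) + 2) ^ 2 * (r / ρ) ^ n * (a (n + 2) * ρ ^ n)
        ≤ ((n : ℝ) + 2) ^ 2 * (r / ρ) ^ n * C := by
          apply mul_le_mul_of_nonneg_left h1 (by positivity)
      _ = C * (((n : ℝ) + 2) ^ 2 * (r / ρ) ^ n) := by ring

private lemma hasDerivAt_g (a : ℕ → ℝ) (ha : ∀ n, 0 ≤ a n)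
    (hs : ∀ r : ℝ, 0 ≤ r → r < 1 → Summable fun n => a (n + 2) * r ^ n)
    {z : ℂ} (hz : ‖z‖ < 1) :
    HasDerivAt (fun w : ℂ => ∑' n : ℕ, ((a (n + 2) : ℝ) : ℂ) * w ^ (n + 2))
      (∑' n : ℕ, ((((n : ℝ) + 2) * a (n + 2) : ℝ) : ℂ) * z ^ (n + 1)) z := by
  have hz0 : (0:ℝ) ≤ ‖z‖ := norm_nonneg z
  set s := (‖z‖ + 1) / 2 with hsdef
  have hs0 : 0 < s := by positivity
  have hs1 : s < 1 := by rw [hsdef]; linarith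
  have hzs : ‖z‖ < s := by rw [hsdef]; linarith
  have hu := keySummable a ha hs (le_of_lt hs0) hs1
  refine hasDerivAt_tsum_of_isPreconnected (F := ℂ) (g := fun n w => ((a (n + 2) : ℝ) : ℂ) * w ^ (n + 2)) (g' := fun n y => ((((n : ℝ) + 2) * a (n + 2) : ℝ) : ℂ) * y ^ (n + 1)) (y₀ := 0) hu Metric.isOpen_ball
    ((convex_ball (0:ℂ) s).isPreconnected) (fun n y _ => ?_) (fun n y hy => ?_)
    (Metric.mem_ball_self (by exact_mod_cast hs0)) ?_ ?_
  · have h := (hasDerivAt_pow (n + 2) y).const_mul ((a (n + 2) : ℝ) : ℂ)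
    convert h using 1
    · rfl
    push_cast
    ring
  · rw [Metric.mem_ball, dist_zero_right] at hy
    rw [norm_mul, norm_pow, Complex.norm_real, Real.norm_eq_abs,
      _root_.abs_of_nonneg (by have := ha (n+2); positivity : (0:ℝ) ≤ ((n : ℝ) + 2) * a (n + 2))]
    calc ((n : ℝ) + 2) * a (n + 2) * ‖y‖ ^ (n + 1)
        ≤ ((n : ℝ) + 2) * a (n + 2) * s ^ (n + 1) := by
          apply mul_le_mul_of_nonneg_left (pow_le_pow_left₀ (norm_nonneg y) hy.le _)
          have := ha (n + 2); positivity
      _ ≤ ((n : ℝ) + 2) ^ 2 * a (n + 2) * s ^ n := by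
          have h1 : s ^ (n + 1) = s * s ^ n := by ring
          rw [h1]
          have h2 : ((n : ℝ) + 2) * a (n + 2) * (s * s ^ n)
              = (((n : ℝ) + 2) * s) * (a (n + 2) * s ^ n) := by ring
          have h3 : ((n : ℝ) + 2) ^ 2 * a (n + 2) * s ^ n
              = (((n : ℝ) + 2) * ((n:ℝ)+2)) * (a (n + 2) * s ^ n) := by ring
          rw [h2, h3]
          apply mul_le_mul_of_nonneg_right _ (by have := ha (n+2); positivity)
          apply mul_le_mul_of_nonneg_left _ (by positivity)
          linarith
  · have : (fun n : ℕ => ((a (n + 2) : ℝ) : ℂ) * (0:ℂ) ^ (n + 2)) = fun _ => 0 := by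
      funext n; simp
    rw [this]
    exact summable_zero
  · rwa [Metric.mem_ball, dist_zero_right]

private lemma hasDerivAt_g1 (a : ℕ → ℝ) (ha : ∀ n, 0 ≤ a n)
    (hs : ∀ r : ℝ, 0 ≤ r → r < 1 → Summable fun n => a (n + 2) * r ^ n)
    {z : ℂ} (hz : ‖z‖ < 1) :
    HasDerivAt (fun w : ℂ => ∑' n : ℕ, ((((n : ℝ) + 2) * a (n + 2) : ℝ) : ℂ) * w ^ (n + 1))
      (∑' n : ℕ, ((((n : ℝ) + 2) * ((n : ℝ) + 1) * a (n + 2) : ℝ) : ℂ) * z ^ n) z := by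
  have hz0 : (0:ℝ) ≤ ‖z‖ := norm_nonneg z
  set s := (‖z‖ + 1) / 2 with hsdef
  have hs0 : 0 < s := by positivity
  have hs1 : s < 1 := by rw [hsdef]; linarith
  have hzs : ‖z‖ < s := by rw [hsdef]; linarith
  have hu := keySummable a ha hs (le_of_lt hs0) hs1
  refine hasDerivAt_tsum_of_isPreconnected (F := ℂ)
    (g := fun (n : ℕ) (w : ℂ) => ((((n : ℝ) + 2) * a (n + 2) : ℝ) : ℂ) * w ^ (n + 1))
    (g' := fun (n : ℕ) (y : ℂ) => ((((n : ℝ) + 2) * ((n : ℝ) + 1) * a (n + 2) : ℝ) : ℂ) * y ^ n)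
    (y₀ := 0) hu Metric.isOpen_ball
    ((convex_ball (0:ℂ) s).isPreconnected) (fun n y _ => ?_) (fun n y hy => ?_)
    (Metric.mem_ball_self (by exact_mod_cast hs0)) ?_ ?_
  · have h := (hasDerivAt_pow (n + 1) y).const_mul ((((n : ℝ) + 2) * a (n + 2) : ℝ) : ℂ)
    convert h using 1
    · rfl
    push_cast
    ring
  · rw [Metric.mem_ball, dist_zero_right] at hy
    rw [norm_mul, norm_pow, Complex.norm_real, Real.norm_eq_abs,
      _root_.abs_of_nonneg (by have := ha (n+2); positivity :
        (0:ℝ) ≤ ((n : ℝ) + 2) * ((n : ℝ) + 1) * a (n + 2))]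
    calc ((n : ℝ) + 2) * ((n : ℝ) + 1) * a (n + 2) * ‖y‖ ^ n
        ≤ ((n : ℝ) + 2) * ((n : ℝ) + 1) * a (n + 2) * s ^ n := by
          apply mul_le_mul_of_nonneg_left (pow_le_pow_left₀ (norm_nonneg y) hy.le _)
          have := ha (n + 2); positivity
      _ ≤ ((n : ℝ) + 2) ^ 2 * a (n + 2) * s ^ n := by
          have h3 : ((n:ℝ)+1) ≤ ((n:ℝ)+2) := by linarith
          have h4 : ((n : ℝ) + 2) * ((n : ℝ) + 1) ≤ ((n:ℝ)+2)^2 := by nlinarith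
          apply mul_le_mul_of_nonneg_right _ (by positivity)
          apply mul_le_mul_of_nonneg_right h4 (ha (n+2))
  · have : (fun n : ℕ => ((((n : ℝ) + 2) * a (n + 2) : ℝ) : ℂ) * (0:ℂ) ^ (n + 1)) = fun _ => 0 := by
      funext n; simp
    rw [this]
    exact summable_zero
  · rwa [Metric.mem_ball, dist_zero_right]

private lemma contD (a : ℕ → ℝ) (ha : ∀ n, 0 ≤ a n)
    (hs : ∀ r : ℝ, 0 ≤ r → r < 1 → Summable fun n => a (n + 2) * r ^ n)
    {s : ℝ} (hs0 : 0 ≤ s) (hs1 : s < 1) :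
    ContinuousOn (fun r : ℝ => ∑' n : ℕ, ((n:ℝ)+2) * a (n+2) * r^(n+1)) (Set.Icc 0 s) := by
  apply continuousOn_tsum (u := fun n : ℕ => ((n:ℝ)+2)^2 * a (n+2) * s^n)
  · intro n
    exact (continuous_const.mul (continuous_pow (n+1))).continuousOn
  · exact keySummable a ha hs hs0 hs1
  · rintro n x ⟨hx0, hxs⟩
    rw [Real.norm_eq_abs, abs_mul, _root_.abs_pow,
      _root_.abs_of_nonneg (by have := ha (n+2); positivity : (0:ℝ) ≤ ((n:ℝ)+2) * a (n+2)),
      _root_.abs_of_nonneg hx0]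
    have h0 : (0:ℝ) ≤ (n:ℝ) := Nat.cast_nonneg n
    have h1 : (0:ℝ) ≤ a (n+2) := ha _
    calc ((n:ℝ)+2) * a (n+2) * x^(n+1) ≤ ((n:ℝ)+2) * a (n+2) * s^(n+1) := by
          apply mul_le_mul_of_nonneg_left (pow_le_pow_left₀ hx0 hxs _) (by positivity)
      _ ≤ ((n:ℝ)+2) * a (n+2) * s^n := by
          apply mul_le_mul_of_nonneg_left (pow_le_pow_of_le_one hs0 hs1.le (Nat.le_succ n))
            (by positivity)
      _ ≤ ((n:ℝ)+2)^2 * a (n+2) * s^n := by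
          apply mul_le_mul_of_nonneg_right _ (by positivity)
          apply mul_le_mul_of_nonneg_right _ h1
          nlinarith

private lemma infArg (c : ℝ) (hc0 : 0 < c) (D : ℝ → ℝ)
    (hcont : ∀ s : ℝ, 0 ≤ s → s < 1 → ContinuousOn D (Set.Icc 0 s))
    (hD0 : D 0 = 0)
    (hkey : ∀ r : ℝ, 0 ≤ r → r < 1 → D r ≤ c → D r < c) :
    ∀ r : ℝ, 0 ≤ r → r < 1 → D r ≤ c := by
  by_contra hcon
  push_neg at hcon
  obtain ⟨r₁, hr₁0, hr₁1, hr₁⟩ := hcon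
  set B := {r : ℝ | 0 ≤ r ∧ r < 1 ∧ c < D r} with hB
  have hne : B.Nonempty := ⟨r₁, hr₁0, hr₁1, hr₁⟩
  have hbdd : BddBelow B := ⟨0, fun x hx => hx.1⟩
  set ρ := sInf B with hρ
  have hρ0 : 0 ≤ ρ := le_csInf hne fun x hx => hx.1
  have hρr₁ : ρ ≤ r₁ := csInf_le hbdd ⟨hr₁0, hr₁1, hr₁⟩
  have hρ1 : ρ < 1 := lt_of_le_of_lt hρr₁ hr₁1
  set s := (ρ + 1) / 2 with hsdef
  have hρs : ρ < s := by rw [hsdef]; linarith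
  have hs0 : 0 ≤ s := by rw [hsdef]; linarith
  have hs1 : s < 1 := by rw [hsdef]; linarith
  have hρmem : ρ ∈ Set.Icc 0 s := ⟨hρ0, hρs.le⟩
  have hcw : ContinuousWithinAt D (Set.Icc 0 s) ρ :=
    (hcont s hs0 hs1).continuousWithinAt hρmem
  -- c ≤ D ρ
  obtain ⟨u, hanti, hutend, humem⟩ := exists_seq_tendsto_sInf hne hbdd
  have hus : ∀ᶠ k in Filter.atTop, u k < s := hutend.eventually (gt_mem_nhds hρs)
  have hucomp : Filter.Tendsto (fun k => D (u k)) Filter.atTop (𝓝 (D ρ)) := by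
    apply hcw.tendsto.comp
    rw [tendsto_nhdsWithin_iff]
    refine ⟨hutend, ?_⟩
    filter_upwards [hus] with k hk
    exact ⟨(humem k).1, hk.le⟩
  have hge : c ≤ D ρ := by
    apply ge_of_tendsto hucomp
    filter_upwards with k
    exact ((humem k).2.2).le
  -- D ρ ≤ c
  have hle : D ρ ≤ c := by
    rcases eq_or_lt_of_le hρ0 with h0 | h0
    · rw [← h0, hD0]; exact hc0.le
    · have hne2 : (𝓝[Set.Ico 0 ρ] ρ).NeBot := by
        rw [← mem_closure_iff_nhdsWithin_neBot, closure_Ico h0.ne, Set.mem_Icc]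
        exact ⟨hρ0, le_refl ρ⟩
      have htend : Filter.Tendsto D (𝓝[Set.Ico 0 ρ] ρ) (𝓝 (D ρ)) := by
        apply hcw.tendsto.mono_left
        apply nhdsWithin_mono
        intro x hx
        exact ⟨hx.1, le_trans hx.2.le hρs.le⟩
      apply le_of_tendsto htend
      filter_upwards [eventually_mem_nhdsWithin] with x hx
      have hxB : x ∉ B := fun hmem => absurd (csInf_le hbdd hmem) (not_le.mpr hx.2)
      rw [hB, Set.mem_setOf_eq] at hxB
      push_neg at hxB
      exact hxB hx.1 (lt_trans hx.2 hρ1)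
  exact absurd hge (not_le.mpr (hkey ρ hρ0 hρ1 hle))
theorem stmt10 (α : ℝ) (hα0 : 0 ≤ α) (hα1 : α < 1)
    (f : ℂ → ℂ) (a : ℕ → ℝ) (ha : ∀ n, 0 ≤ a n)
    (hf : ∀ z ∈ Metric.ball (0 : ℂ) 1,
      HasSum (fun n : ℕ => ((a (n + 2) : ℝ) : ℂ) * z ^ (n + 2)) (z - f z)) :
    (∀ z ∈ Metric.ball (0 : ℂ) 1,
      α < ((1 + z * deriv (deriv f) z / deriv f z).re)) ↔
    (Summable (fun n : ℕ => ((n : ℝ) + 2) * (((n : ℝ) + 2) - α) * a (n + 2)) ∧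
    ∑' n : ℕ, ((n : ℝ) + 2) * (((n : ℝ) + 2) - α) * a (n + 2) ≤ 1 - α) := by
  have h1α : (0:ℝ) < 1 - α := by linarith
  have h2α : (0:ℝ) < 2 - α := by linarith
  have hwnn : ∀ n : ℕ, 0 ≤ ((n : ℝ) + 2) * (((n : ℝ) + 2) - α) * a (n + 2) := by
    intro n
    have h1 : (0:ℝ) ≤ (n:ℝ) := Nat.cast_nonneg n
    exact mul_nonneg (mul_nonneg (by linarith) (by linarith)) (ha _)
  -- base summability
  have hs : ∀ r : ℝ, 0 ≤ r → r < 1 → Summable fun n => a (n + 2) * r ^ n := by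
    intro r hr0 hr1
    have hball : (r:ℂ) ∈ Metric.ball (0:ℂ) 1 := by
      rw [Metric.mem_ball, dist_zero_right, Complex.norm_real, Real.norm_eq_abs,
        _root_.abs_of_nonneg hr0]
      exact hr1
    have h := (hf _ hball).summable
    have h2 : Summable (fun n : ℕ => a (n+2) * r^(n+2)) := by
      rw [← Complex.summable_ofReal]
      apply h.congr
      intro n
      push_cast
      ring
    rcases eq_or_lt_of_le hr0 with h0 | h0
    · apply summable_of_ne_finset_zero (s := {0})
      intro n hn
      simp only [Finset.mem_singleton] at hn
      rw [← h0, zero_pow hn, mul_zero]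
    · have h3 : Summable (fun n : ℕ => (a (n+2) * r^n) * r^2) := by
        apply h2.congr
        intro n
        ring
      exact (summable_mul_right_iff (pow_ne_zero 2 h0.ne')).mp h3
  have hrpow : ∀ (r : ℝ), 0 ≤ r → r < 1 → ∀ n : ℕ, r ^ (n+1) ≤ r ^ n := by
    intro r hr0 hr1 n
    exact pow_le_pow_of_le_one hr0 hr1.le (Nat.le_succ n)
  have sumD : ∀ r : ℝ, 0 ≤ r → r < 1 →
      Summable (fun n : ℕ => ((n:ℝ)+2) * a (n+2) * r^(n+1)) := by
    intro r hr0 hr1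
    apply (keySummable a ha hs hr0 hr1).of_nonneg_of_le
    · intro n; have := ha (n+2); positivity
    · intro n
      calc ((n:ℝ)+2) * a (n+2) * r^(n+1) ≤ ((n:ℝ)+2) * a (n+2) * r^n := by
            apply mul_le_mul_of_nonneg_left (hrpow r hr0 hr1 n)
            have := ha (n+2); positivity
        _ ≤ ((n:ℝ)+2)^2 * a (n+2) * r^n := by
            have h1 : ((n:ℝ)+2) ≤ ((n:ℝ)+2)^2 := by nlinarith [Nat.cast_nonneg (α := ℝ) n]
            apply mul_le_mul_of_nonneg_right _ (by positivity)
            exact mul_le_mul_of_nonneg_right h1 (ha _)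
  have sumE : ∀ r : ℝ, 0 ≤ r → r < 1 →
      Summable (fun n : ℕ => ((n:ℝ)+2) * ((n:ℝ)+1) * a (n+2) * r^n) := by
    intro r hr0 hr1
    apply (keySummable a ha hs hr0 hr1).of_nonneg_of_le
    · intro n; have := ha (n+2); positivity
    · intro n
      have h1 : ((n:ℝ)+2) * ((n:ℝ)+1) ≤ ((n:ℝ)+2)^2 := by nlinarith [Nat.cast_nonneg (α := ℝ) n]
      apply mul_le_mul_of_nonneg_right _ (by positivity)
      exact mul_le_mul_of_nonneg_right h1 (ha _)
  have sumQ : ∀ r : ℝ, 0 ≤ r → r < 1 →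
      Summable (fun n : ℕ => ((n:ℝ)+2) * (((n:ℝ)+2) - α) * a (n+2) * r^(n+1)) := by
    intro r hr0 hr1
    apply (keySummable a ha hs hr0 hr1).of_nonneg_of_le
    · intro n
      exact mul_nonneg (hwnn n) (by positivity)
    · intro n
      have h0 : (0:ℝ) ≤ (n:ℝ) := Nat.cast_nonneg n
      calc ((n:ℝ)+2) * (((n:ℝ)+2) - α) * a (n+2) * r^(n+1)
          ≤ ((n:ℝ)+2) * (((n:ℝ)+2) - α) * a (n+2) * r^n := by
            apply mul_le_mul_of_nonneg_left (hrpow r hr0 hr1 n)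
            have := ha (n+2)
            exact mul_nonneg (mul_nonneg (by linarith) (by linarith)) this
        _ ≤ ((n:ℝ)+2)^2 * a (n+2) * r^n := by
            apply mul_le_mul_of_nonneg_right _ (by positivity)
            apply mul_le_mul_of_nonneg_right _ (ha _)
            nlinarith
  -- formulas for the derivatives on the ball
  have hfg : ∀ z ∈ Metric.ball (0:ℂ) 1,
      f z = z - ∑' n : ℕ, ((a (n + 2) : ℝ) : ℂ) * z ^ (n + 2) := by
    intro z hz
    have h := (hf z hz).tsum_eq
    rw [h]
    ring
  have hderiv1 : ∀ z ∈ Metric.ball (0:ℂ) 1,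
      deriv f z = 1 - ∑' n : ℕ, ((((n : ℝ) + 2) * a (n + 2) : ℝ) : ℂ) * z ^ (n + 1) := by
    intro z hz
    have hz' : ‖z‖ < 1 := mem_ball_zero_iff.mp hz
    have h := (hasDerivAt_id z).sub (hasDerivAt_g a ha hs hz')
    have h2 : HasDerivAt f
        (1 - ∑' n : ℕ, ((((n : ℝ) + 2) * a (n + 2) : ℝ) : ℂ) * z ^ (n + 1)) z := by
      apply h.congr_of_eventuallyEq
      filter_upwards [Metric.isOpen_ball.mem_nhds hz] with w hw
      exact hfg w hw
    exact h2.deriv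
  have hderiv2 : ∀ z ∈ Metric.ball (0:ℂ) 1,
      deriv (deriv f) z
        = -∑' n : ℕ, ((((n : ℝ) + 2) * ((n : ℝ) + 1) * a (n + 2) : ℝ) : ℂ) * z ^ n := by
    intro z hz
    have hz' : ‖z‖ < 1 := mem_ball_zero_iff.mp hz
    have h := (hasDerivAt_const z (1:ℂ)).sub (hasDerivAt_g1 a ha hs hz')
    rw [zero_sub] at h
    have h2 : HasDerivAt (deriv f)
        (-∑' n : ℕ, ((((n : ℝ) + 2) * ((n : ℝ) + 1) * a (n + 2) : ℝ) : ℂ) * z ^ n) z := by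
      apply h.congr_of_eventuallyEq
      filter_upwards [Metric.isOpen_ball.mem_nhds hz] with w hw
      exact hderiv1 w hw
    exact h2.deriv
  have hDval : ∀ r : ℝ, (∑' n : ℕ, ((((n : ℝ) + 2) * a (n + 2) : ℝ) : ℂ) * (r:ℂ) ^ (n + 1))
      = (((∑' n : ℕ, ((n:ℝ)+2) * a (n+2) * r^(n+1) : ℝ)) : ℂ) := by
    intro r
    rw [Complex.ofReal_tsum]
    apply tsum_congr
    intro n
    push_cast
    ring
  have hEval : ∀ r : ℝ,
      (∑' n : ℕ, ((((n : ℝ) + 2) * ((n : ℝ) + 1) * a (n + 2) : ℝ) : ℂ) * (r:ℂ) ^ n)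
      = (((∑' n : ℕ, ((n:ℝ)+2) * ((n:ℝ)+1) * a (n+2) * r^n : ℝ)) : ℂ) := by
    intro r
    rw [Complex.ofReal_tsum]
    apply tsum_congr
    intro n
    push_cast
    ring
  constructor
  · -- forward direction
    intro hC
    have hQlt : ∀ r : ℝ, 0 ≤ r → r < 1 →
        (∑' n : ℕ, ((n:ℝ)+2) * a (n+2) * r^(n+1)) < 1 →
        (∑' n : ℕ, ((n:ℝ)+2) * (((n:ℝ)+2) - α) * a (n+2) * r^(n+1)) < 1 - α := by
      intro r hr0 hr1 hD
      set D := ∑' n : ℕ, ((n:ℝ)+2) * a (n+2) * r^(n+1) with hDdef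
      set E := ∑' n : ℕ, ((n:ℝ)+2) * ((n:ℝ)+1) * a (n+2) * r^n with hEdef
      have hball : (r:ℂ) ∈ Metric.ball (0:ℂ) 1 := by
        rw [Metric.mem_ball, dist_zero_right, Complex.norm_real, Real.norm_eq_abs,
          _root_.abs_of_nonneg hr0]
        exact hr1
      have hc := hC _ hball
      rw [hderiv1 _ hball, hderiv2 _ hball, hDval, hEval] at hc
      have heq : (1 + (r:ℂ) * -(((E:ℝ)):ℂ) / (1 - ((D:ℝ):ℂ)))
          = (((1 + r * -E / (1 - D) : ℝ)) : ℂ) := by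
        push_cast
        ring
      rw [heq, Complex.ofReal_re] at hc
      have hDpos : 0 < 1 - D := by linarith
      have h2 : r * E < (1 - α) * (1 - D) := by
        have h3 : r * -E / (1 - D) = -(r * E / (1 - D)) := by ring
        rw [h3] at hc
        have h4 : r * E / (1 - D) < 1 - α := by linarith
        calc r * E = (r * E / (1 - D)) * (1 - D) := by field_simp
          _ < (1 - α) * (1 - D) := mul_lt_mul_of_pos_right h4 hDpos
      have hsplit : (∑' n : ℕ, ((n:ℝ)+2) * (((n:ℝ)+2) - α) * a (n+2) * r^(n+1))
          = r * E + (1 - α) * D := by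
        rw [hDdef, hEdef, ← tsum_mul_left, ← tsum_mul_left,
          ← Summable.tsum_add ((sumE r hr0 hr1).mul_left r) ((sumD r hr0 hr1).mul_left (1-α))]
        apply tsum_congr
        intro n
        have hp : r ^ (n+1) = r * r ^ n := by ring
        rw [hp]
        ring
      rw [hsplit]
      nlinarith
    have hQD : ∀ r : ℝ, 0 ≤ r → r < 1 →
        (2 - α) * (∑' n : ℕ, ((n:ℝ)+2) * a (n+2) * r^(n+1))
          ≤ ∑' n : ℕ, ((n:ℝ)+2) * (((n:ℝ)+2) - α) * a (n+2) * r^(n+1) := by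
      intro r hr0 hr1
      rw [← tsum_mul_left]
      apply Summable.tsum_le_tsum _ ((sumD r hr0 hr1).mul_left (2-α)) (sumQ r hr0 hr1)
      intro n
      have h0 : (0:ℝ) ≤ (n:ℝ) := Nat.cast_nonneg n
      have h1 : (0:ℝ) ≤ a (n+2) := ha _
      have h2 : (0:ℝ) ≤ r^(n+1) := by positivity
      nlinarith [mul_nonneg (mul_nonneg h0 h1) h2]
    have hc0 : 0 < (1-α)/(2-α) := div_pos h1α h2α
    have hc1 : (1-α)/(2-α) < 1 := by
      rw [div_lt_one h2α]; linarith
    have hDc : ∀ r : ℝ, 0 ≤ r → r < 1 →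
        (∑' n : ℕ, ((n:ℝ)+2) * a (n+2) * r^(n+1)) ≤ (1-α)/(2-α) := by
      apply infArg _ hc0 _ (fun s hs0 hs1 => contD a ha hs hs0 hs1)
      · show (∑' n : ℕ, ((n:ℝ)+2) * a (n+2) * (0:ℝ)^(n+1)) = 0
        have hzz : (fun n : ℕ => ((n:ℝ)+2) * a (n+2) * (0:ℝ)^(n+1)) = fun _ => 0 := by
          funext n
          simp
        rw [hzz, tsum_zero]
      · intro r hr0 hr1 hrc
        have hD1 : (∑' n : ℕ, ((n:ℝ)+2) * a (n+2) * r^(n+1)) < 1 := lt_of_le_of_lt hrc hc1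
        have hQ := hQlt r hr0 hr1 hD1
        have hqd := hQD r hr0 hr1
        rw [lt_div_iff₀ h2α]
        nlinarith
    have hFbound : ∀ F : Finset ℕ,
        ∑ n ∈ F, ((n : ℝ) + 2) * (((n : ℝ) + 2) - α) * a (n + 2) ≤ 1 - α := by
      intro F
      have hcont : Continuous (fun r : ℝ =>
          ∑ n ∈ F, ((n:ℝ)+2) * (((n:ℝ)+2) - α) * a (n+2) * r^(n+1)) := by
        apply continuous_finset_sum
        intro n _
        exact continuous_const.mul (continuous_pow (n+1))
      have htend : Tendsto (fun r : ℝ =>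
          ∑ n ∈ F, ((n:ℝ)+2) * (((n:ℝ)+2) - α) * a (n+2) * r^(n+1)) (𝓝[<] (1:ℝ))
          (𝓝 (∑ n ∈ F, ((n : ℝ) + 2) * (((n : ℝ) + 2) - α) * a (n + 2))) := by
        have h1 := (hcont.tendsto 1).mono_left (nhdsWithin_le_nhds (s := Set.Iio (1:ℝ)))
        convert h1 using 2
        simp
      apply le_of_tendsto htend
      have hIoo : Set.Ioo (0:ℝ) 1 ∈ 𝓝[<] (1:ℝ) :=
        Ioo_mem_nhdsLT_of_mem (Set.mem_Ioc.mpr ⟨zero_lt_one, le_refl 1⟩)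
      filter_upwards [hIoo] with r hr
      calc ∑ n ∈ F, ((n:ℝ)+2) * (((n:ℝ)+2) - α) * a (n+2) * r^(n+1)
          ≤ ∑' n : ℕ, ((n:ℝ)+2) * (((n:ℝ)+2) - α) * a (n+2) * r^(n+1) := by
            apply Summable.sum_le_tsum F (fun n _ => ?_) (sumQ r hr.1.le hr.2)
            exact mul_nonneg (hwnn n) (pow_nonneg hr.1.le _)
        _ ≤ 1 - α := by
            apply le_of_lt
            apply hQlt r hr.1.le hr.2
            exact lt_of_le_of_lt (hDc r hr.1.le hr.2) hc1
    exact ⟨summable_of_sum_le hwnn hFbound,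
      Summable.tsum_le_of_sum_le (summable_of_sum_le hwnn hFbound) hFbound⟩
  · -- backward direction
    rintro ⟨hSum, hle⟩ z hz
    have hr1 : ‖z‖ < 1 := mem_ball_zero_iff.mp hz
    have hr0 : (0:ℝ) ≤ ‖z‖ := norm_nonneg z
    set r := ‖z‖ with hrdef
    rw [hderiv1 z hz, hderiv2 z hz]
    set G1 := ∑' n : ℕ, ((((n : ℝ) + 2) * a (n + 2) : ℝ) : ℂ) * z ^ (n + 1) with hG1def
    set G2 := ∑' n : ℕ, ((((n : ℝ) + 2) * ((n : ℝ) + 1) * a (n + 2) : ℝ) : ℂ) * z ^ n with hG2def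
    set Dn := ∑' n : ℕ, ((n:ℝ)+2) * a (n+2) * r^(n+1) with hDndef
    set En := ∑' n : ℕ, ((n:ℝ)+2) * ((n:ℝ)+1) * a (n+2) * r^n with hEndef
    set W := ∑' n : ℕ, ((n : ℝ) + 2) * (((n : ℝ) + 2) - α) * a (n + 2) with hWdef
    have hDn0 : 0 ≤ Dn := tsum_nonneg fun n => by have := ha (n+2); positivity
    have hEn0 : 0 ≤ En := tsum_nonneg fun n => by have := ha (n+2); positivity
    -- norm bounds
    have hG1n : ‖G1‖ ≤ Dn := by
      rw [hG1def, hDndef]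
      have hsn : Summable (fun n : ℕ => ‖((((n : ℝ) + 2) * a (n + 2) : ℝ) : ℂ) * z ^ (n + 1)‖) := by
        apply (sumD r hr0 hr1).congr
        intro n
        rw [norm_mul, norm_pow, Complex.norm_real, Real.norm_eq_abs,
          _root_.abs_of_nonneg (by have := ha (n+2); positivity : (0:ℝ) ≤ ((n:ℝ)+2) * a (n+2))]
      calc ‖∑' n : ℕ, ((((n : ℝ) + 2) * a (n + 2) : ℝ) : ℂ) * z ^ (n + 1)‖
          ≤ ∑' n : ℕ, ‖((((n : ℝ) + 2) * a (n + 2) : ℝ) : ℂ) * z ^ (n + 1)‖ :=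
            norm_tsum_le_tsum_norm hsn
        _ = ∑' n : ℕ, ((n:ℝ)+2) * a (n+2) * r^(n+1) := by
            apply tsum_congr
            intro n
            rw [norm_mul, norm_pow, Complex.norm_real, Real.norm_eq_abs,
              _root_.abs_of_nonneg (by have := ha (n+2); positivity : (0:ℝ) ≤ ((n:ℝ)+2) * a (n+2))]
    have hG2n : ‖G2‖ ≤ En := by
      rw [hG2def, hEndef]
      have hsn : Summable (fun n : ℕ =>
          ‖((((n : ℝ) + 2) * ((n : ℝ) + 1) * a (n + 2) : ℝ) : ℂ) * z ^ n‖) := by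
        apply (sumE r hr0 hr1).congr
        intro n
        rw [norm_mul, norm_pow, Complex.norm_real, Real.norm_eq_abs,
          _root_.abs_of_nonneg
            (by have := ha (n+2); positivity : (0:ℝ) ≤ ((n:ℝ)+2) * ((n:ℝ)+1) * a (n+2))]
      calc ‖∑' n : ℕ, ((((n : ℝ) + 2) * ((n : ℝ) + 1) * a (n + 2) : ℝ) : ℂ) * z ^ n‖
          ≤ ∑' n : ℕ, ‖((((n : ℝ) + 2) * ((n : ℝ) + 1) * a (n + 2) : ℝ) : ℂ) * z ^ n‖ :=
            norm_tsum_le_tsum_norm hsn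
        _ = ∑' n : ℕ, ((n:ℝ)+2) * ((n:ℝ)+1) * a (n+2) * r^n := by
            apply tsum_congr
            intro n
            rw [norm_mul, norm_pow, Complex.norm_real, Real.norm_eq_abs,
              _root_.abs_of_nonneg
                (by have := ha (n+2); positivity : (0:ℝ) ≤ ((n:ℝ)+2) * ((n:ℝ)+1) * a (n+2))]
    -- the key inequality
    have hkey : r * En + (1 - α) * Dn ≤ r * (1 - α) := by
      have h1 : r * En + (1-α) * Dn
          = ∑' n : ℕ, ((n:ℝ)+2) * (((n:ℝ)+2) - α) * a (n+2) * r^(n+1) := by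
        rw [hEndef, hDndef, ← tsum_mul_left, ← tsum_mul_left,
          ← Summable.tsum_add ((sumE r hr0 hr1).mul_left r) ((sumD r hr0 hr1).mul_left (1-α))]
        apply tsum_congr
        intro n
        have hp : r ^ (n+1) = r * r ^ n := by ring
        rw [hp]
        ring
      have h2 : (∑' n : ℕ, ((n:ℝ)+2) * (((n:ℝ)+2) - α) * a (n+2) * r^(n+1)) ≤ W * r := by
        rw [hWdef, ← tsum_mul_right]
        apply Summable.tsum_le_tsum _ (sumQ r hr0 hr1) (hSum.mul_right r)
        intro n
        apply mul_le_mul_of_nonneg_left _ (hwnn n)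
        calc r ^ (n+1) ≤ r ^ 1 := pow_le_pow_of_le_one hr0 hr1.le (by omega)
          _ = r := pow_one r
      have h3 : W * r ≤ (1-α) * r := mul_le_mul_of_nonneg_right hle hr0
      rw [h1]
      calc (∑' n : ℕ, ((n:ℝ)+2) * (((n:ℝ)+2) - α) * a (n+2) * r^(n+1))
          ≤ W * r := h2
        _ ≤ (1-α) * r := h3
        _ = r * (1-α) := by ring
    have hDnr : Dn ≤ r := by nlinarith
    have hDn1 : Dn < 1 := lt_of_le_of_lt hDnr hr1
    -- denominator bound
    have hden : 1 - Dn ≤ ‖1 - G1‖ := by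
      calc 1 - Dn ≤ 1 - ‖G1‖ := by linarith
        _ = ‖(1:ℂ)‖ - ‖G1‖ := by rw [norm_one]
        _ ≤ ‖1 - G1‖ := norm_sub_norm_le 1 G1
    have hdenpos : 0 < 1 - Dn := by linarith
    have hdenpos' : 0 < ‖1 - G1‖ := lt_of_lt_of_le hdenpos hden
    -- numerator strict bound
    have hnum : r * En < (1 - α) * (1 - Dn) := by nlinarith
    -- norm of the quotient
    have hu : ‖z * -G2 / (1 - G1)‖ < 1 - α := by
      rw [norm_div, div_lt_iff₀ hdenpos']
      calc ‖z * -G2‖ = r * ‖G2‖ := by rw [norm_mul, norm_neg]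
        _ ≤ r * En := mul_le_mul_of_nonneg_left hG2n hr0
        _ < (1 - α) * (1 - Dn) := hnum
        _ ≤ (1 - α) * ‖1 - G1‖ := mul_le_mul_of_nonneg_left hden h1α.le
    have hre : |(z * -G2 / (1 - G1)).re| ≤ ‖z * -G2 / (1 - G1)‖ := by
      exact Complex.abs_re_le_norm _
    rw [Complex.add_re, Complex.one_re]
    have := abs_le.mp hre
    linarith [this.1]
end

section
/- Let λ ≥ 1, μ > 0.462, α, β ∈ [0,1), γ ∈ [0,1]. If [(1-αβ)γ + (1-αβ + (2-(1+β)α)γ)μ] μ^{-2} e^{1/μ} ≤ 1-α, then Σ_{n≥2} (1+(n-1)γ)(n-α-(n-1)αβ) · [Γ(μ)/Γ(λ(n-1)+μ)] · e^{-1/μ}/(n-1)! ≤ 1-α, and hence the function F_{λ,μ}(z) = z + Σ_{n≥2} [Γ(μ)/Γ(λ(n-1)+μ)] e^{-1/μ}/(n-1)! · z^n belongs to S*C(α,β;γ). -/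
open Complex

noncomputable def Ffun (lam μ : ℝ) : ℂ → ℂ := fun z =>
  z + ∑' n : ℕ,
    ((Real.Gamma μ / Real.Gamma (lam * ((n : ℝ) + 1) + μ) * Real.exp (-1 / μ) /
      (Nat.factorial (n + 1) : ℝ) : ℝ) : ℂ) * z ^ (n + 2)



section AuxStmt13
open Real Metric Filter Finset

lemma log_ratio_le {x y : ℝ} (hx : 0 < x) (hxy : x ≤ y) :
    Real.log y - Real.log x ≤ (y - x) / x := by
  have hy : 0 < y := lt_of_lt_of_le hx hxy
  have h1 : Real.log (y / x) ≤ y / x - 1 := Real.log_le_sub_one_of_pos (by positivity)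
  rw [Real.log_div (ne_of_gt hy) (ne_of_gt hx)] at h1
  have : y / x - 1 = (y - x) / x := by field_simp
  linarith [this ▸ h1]

lemma log_ratio_ge_cubic {t : ℝ} (h0 : 0 < t) (h1 : t ≤ 1/6) :
    2*t + 2*t^3/3 ≤ Real.log (1+t) - Real.log (1-t) := by
  have habs : |t| < 1 := by rw [_root_.abs_of_pos h0]; linarith
  have habs' : |(-t)| < 1 := by rwa [abs_neg]
  have H1 := Real.abs_log_sub_add_sum_range_le habs 5
  have H2 := Real.abs_log_sub_add_sum_range_le habs' 5
  rw [_root_.abs_of_pos h0] at H1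
  rw [abs_neg, _root_.abs_of_pos h0] at H2
  simp only [Finset.sum_range_succ, Finset.sum_range_zero] at H1 H2
  rw [abs_le] at H1 H2
  have e1 := H1.2
  have e2 := H2.1
  -- H1 : sum(t) + log(1-t) ≤ t^6/(1-t) ; H2 : -(t^6/(1-t)) ≤ sum(-t) + log(1+t)
  have hden : (0:ℝ) < 1 - t := by linarith
  have key : t^6/(1-t) ≤ t^5/5 := by
    rw [div_le_div_iff₀ hden (by norm_num)]
    nlinarith [pow_pos h0 5, pow_pos h0 6]
  have hsn : (1:ℝ) - -t = 1 + t := by ring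
  rw [hsn] at e2
  push_cast at e1 e2
  nlinarith [e1, e2, key]

lemma telescope_term {x : ℝ} (hx : (10.9:ℝ) ≤ x) :
    1/x + (1/25)*(1/(x-1/2)^2 - 1/(x+1/2)^2) ≤ Real.log (x+1/2) - Real.log (x-1/2) := by
  have hx0 : (0:ℝ) < x := by linarith
  have hxne : x ≠ 0 := ne_of_gt hx0
  set t := 1/(2*x) with ht
  have ht0 : 0 < t := by positivity
  have ht6 : t ≤ 1/6 := by
    rw [ht, div_le_div_iff₀ (by linarith) (by norm_num)]; linarith
  have e1 : x + 1/2 = x * (1 + t) := by rw [ht]; field_simp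
  have e2 : x - 1/2 = x * (1 - t) := by rw [ht]; field_simp
  have hlog : Real.log (x+1/2) - Real.log (x-1/2) = Real.log (1+t) - Real.log (1-t) := by
    rw [e1, e2, Real.log_mul (ne_of_gt hx0) (by positivity),
      Real.log_mul (ne_of_gt hx0) (by nlinarith)]
    ring
  rw [hlog]
  refine le_trans ?_ (log_ratio_ge_cubic ht0 ht6)
  -- 1/x + (1/25)(1/(x-1/2)^2 - 1/(x+1/2)^2) ≤ 2t + 2t^3/3 = 1/x + 1/(12 x^3)
  have h2t : 2*t = 1/x := by rw [ht]; ring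
  have h2t3 : 2*t^3/3 = 1/(12*x^3) := by rw [ht]; field_simp; ring
  rw [h2t, h2t3]
  have hd1 : (0:ℝ) < (x-1/2)^2 := by nlinarith
  have hd2 : (0:ℝ) < (x+1/2)^2 := by nlinarith
  have hx2 : (118:ℝ) ≤ x^2 := by nlinarith
  have key : (1/25)*(1/(x-1/2)^2 - 1/(x+1/2)^2) ≤ 1/(12*x^3) := by
    have hD : 1/(x-1/2)^2 - 1/(x+1/2)^2 = (2*x)/((x-1/2)^2*(x+1/2)^2) := by
      rw [div_sub_div 1 1 hd1.ne' hd2.ne']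
      congr 1 <;> ring
    have hQ : (0:ℝ) < (x-1/2)^2*(x+1/2)^2 := by positivity
    have h2 : (1/25)*((2*x)/((x-1/2)^2*(x+1/2)^2)) = (1*(2*x))/(25*((x-1/2)^2*(x+1/2)^2)) :=
      div_mul_div_comm 1 25 (2*x) _
    rw [one_mul] at h2
    rw [hD, h2, div_le_div_iff₀ (by positivity) (by positivity)]
    nlinarith [hx2, sq_nonneg x, pow_pos hx0 2]
  linarith

lemma log_10962 : (2.3942:ℝ) ≤ Real.log (5481/500) := by
  have h2 := Real.log_two_gt_d9
  have hx : |(-(1481/4000):ℝ)| < 1 := by rw [abs_neg, _root_.abs_of_pos (by norm_num)]; norm_num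
  have H := (abs_le.mp (Real.abs_log_sub_add_sum_range_le hx 10)).1
  have heq : (1:ℝ) - (-(1481/4000)) = 5481/4000 := by norm_num
  rw [heq] at H
  simp only [Finset.sum_range_succ, Finset.sum_range_zero] at H
  have hsplit : Real.log (5481/500) = 3*Real.log 2 + Real.log (5481/4000) := by
    have h8 : (5481:ℝ)/500 = 2^3 * (5481/4000) := by norm_num
    rw [h8, Real.log_mul (by norm_num) (by norm_num), Real.log_pow]
    push_cast; ring
  rw [hsplit]
  rw [abs_neg, _root_.abs_of_pos (by norm_num : (0:ℝ) < 1481/4000)] at H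
  norm_num at H ⊢
  linarith

lemma sum_inv_le_log {a : ℝ} (ha : (1.462:ℝ) ≤ a) {n : ℕ} (hn : 1000000 ≤ n) :
    ∑ k ∈ Finset.range (n+1), 1/(a+k) ≤ Real.log n := by
  have ha0 : (0:ℝ) < a := by linarith
  set A : ℝ := 1.462 with hA
  have step1 : ∑ k ∈ Finset.range (n+1), 1/(a+(k:ℝ)) ≤ ∑ k ∈ Finset.range (n+1), 1/(A+(k:ℝ)) := by
    refine Finset.sum_le_sum (fun k _ => ?_)
    have hk0 : (0:ℝ) ≤ (k:ℝ) := Nat.cast_nonneg k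
    apply one_div_le_one_div_of_le (by positivity) (by linarith)
  set f : ℕ → ℝ := fun k => Real.log (A+k-1/2) + (1/25)*(1/(A+k-1/2)^2) with hf
  have hterm : ∀ k : ℕ, 10 ≤ k → 1/(A+(k:ℝ)) ≤ f (k+1) - f k := by
    intro k hk
    have hk10 : (10:ℝ) ≤ (k:ℝ) := by exact_mod_cast hk
    have hx : (10.9:ℝ) ≤ A + (k:ℝ) := by rw [hA]; norm_num; linarith
    have H := telescope_term hx
    simp only [hf]
    push_cast
    have e1 : A + ((k:ℝ)+1) - 1/2 = A + (k:ℝ) + 1/2 := by ring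
    have e2 : A + (k:ℝ) - 1/2 = A + (k:ℝ) - 1/2 := rfl
    rw [e1]
    linarith [H]
  have hsplit : ∑ k ∈ Finset.range (n+1), 1/(A+(k:ℝ))
      = ∑ k ∈ Finset.range 10, 1/(A+(k:ℝ)) + ∑ k ∈ Finset.Ico 10 (n+1), 1/(A+(k:ℝ)) := by
    have h := Finset.sum_Ico_consecutive (fun k : ℕ => 1/(A+(k:ℝ)))
      (show 0 ≤ 10 by omega) (show 10 ≤ n+1 by omega)
    simp only [← Finset.range_eq_Ico] at h
    exact h.symm
  have htel : ∑ k ∈ Finset.Ico 10 (n+1), (f (k+1) - f k) = f (n+1) - f 10 := by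
    rw [Finset.sum_Ico_eq_sub _ (by omega), Finset.sum_range_sub, Finset.sum_range_sub]
    ring
  have hbound2 : ∑ k ∈ Finset.Ico 10 (n+1), 1/(A+(k:ℝ)) ≤ f (n+1) - f 10 := by
    rw [← htel]
    exact Finset.sum_le_sum (fun k hk => hterm k (Finset.mem_Ico.1 hk).1)
  have hn' : (1000000:ℝ) ≤ (n:ℝ) := by exact_mod_cast hn
  have hnpos : (0:ℝ) < (n:ℝ) := by linarith
  -- bound f (n+1)
  have hfn : f (n+1) ≤ Real.log n + (1962:ℝ)/1000000000 + 1/1000000000 := by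
    simp only [hf]
    push_cast
    have hb : A + ((n:ℝ)+1) - 1/2 = (n:ℝ) + 1.962 := by rw [hA]; ring
    rw [hb]
    have h1 : Real.log ((n:ℝ)+1.962) - Real.log n ≤ ((n:ℝ)+1.962 - n)/n :=
      log_ratio_le hnpos (by linarith)
    have h2 : ((n:ℝ)+1.962-n)/n ≤ (1962:ℝ)/1000000000 := by
      rw [show ((n:ℝ)+1.962-n) = 1.962 by ring]
      rw [div_le_div_iff₀ hnpos (by norm_num)]
      linarith
    have h3 : (1/25)*(1/((n:ℝ)+1.962)^2) ≤ (1:ℝ)/1000000000 := by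
      have hb2 : (1000000000:ℝ) ≤ ((n:ℝ)+1.962)^2 := by nlinarith
      have : 1/((n:ℝ)+1.962)^2 ≤ 1/1000000000 := by
        apply one_div_le_one_div_of_le (by norm_num) hb2
      linarith
    linarith
  have hP10 : ∑ k ∈ Finset.range 10, 1/(A+(k:ℝ)) ≤ 2.3944251 := by
    simp only [Finset.sum_range_succ, Finset.sum_range_zero]
    rw [hA]; norm_num
  have hf10 : (2.394532:ℝ) ≤ f 10 := by
    simp only [hf]
    have e : A + ((10:ℕ):ℝ) - 1/2 = 5481/500 := by rw [hA]; norm_num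
    rw [e]
    have h1 := log_10962
    have h2 : (0.000332:ℝ) ≤ (1/25)*(1/(5481/500:ℝ)^2) := by norm_num
    linarith
  linarith [step1, hsplit, hbound2, hfn, hP10, hf10]

lemma Gamma_le_Gamma {a b : ℝ} (ha : (1.462:ℝ) ≤ a) (hab : a ≤ b) :
    Real.Gamma a ≤ Real.Gamma b := by
  have ha0 : (0:ℝ) < a := by linarith
  have hb0 : (0:ℝ) < b := by linarith
  refine le_of_tendsto_of_tendsto (Real.GammaSeq_tendsto_Gamma a)
    (Real.GammaSeq_tendsto_Gamma b) ?_
  filter_upwards [Filter.eventually_ge_atTop 1000000] with n hn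
  have hn0 : 0 < n := by omega
  have hnR : (0:ℝ) < (n:ℝ) := by exact_mod_cast hn0
  unfold Real.GammaSeq
  have hPa : (0:ℝ) < ∏ j ∈ Finset.range (n+1), (a + j) :=
    Finset.prod_pos (fun j _ => by positivity)
  have hPb : (0:ℝ) < ∏ j ∈ Finset.range (n+1), (b + j) :=
    Finset.prod_pos (fun j _ => by positivity)
  have hfac : (0:ℝ) < (n.factorial : ℝ) := by positivity
  have hna : (0:ℝ) < (n:ℝ) ^ a := Real.rpow_pos_of_pos hnR a
  have hnb : (0:ℝ) < (n:ℝ) ^ b := Real.rpow_pos_of_pos hnR b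
  rw [div_le_div_iff₀ hPa hPb]
  have hL : (0:ℝ) < (n:ℝ) ^ a * (n.factorial:ℝ) * ∏ j ∈ Finset.range (n+1), (b + j) := by
    positivity
  have hR : (0:ℝ) < (n:ℝ) ^ b * (n.factorial:ℝ) * ∏ j ∈ Finset.range (n+1), (a + j) := by
    positivity
  rw [← Real.log_le_log_iff hL hR]
  rw [Real.log_mul (by positivity) (ne_of_gt hPb), Real.log_mul (by positivity) (ne_of_gt hPa),
    Real.log_mul (ne_of_gt hna) (ne_of_gt hfac), Real.log_mul (ne_of_gt hnb) (ne_of_gt hfac),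
    Real.log_rpow hnR, Real.log_rpow hnR,
    Real.log_prod (fun j _ => by positivity), Real.log_prod (fun j _ => by positivity)]
  have key : ∑ j ∈ Finset.range (n+1), Real.log (b + j)
      - ∑ j ∈ Finset.range (n+1), Real.log (a + j) ≤ (b - a) * Real.log n := by
    rw [← Finset.sum_sub_distrib]
    have step : ∀ j ∈ Finset.range (n+1), Real.log (b + (j:ℝ)) - Real.log (a + (j:ℝ))
        ≤ (b - a) * (1/(a + (j:ℝ))) := by
      intro j _
      have hj : (0:ℝ) ≤ (j:ℝ) := Nat.cast_nonneg j
      have h := log_ratio_le (x := a + j) (y := b + j) (by positivity) (by linarith)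
      have e : (b + (j:ℝ) - (a + (j:ℝ)))/(a + (j:ℝ)) = (b-a) * (1/(a+(j:ℝ))) := by
        field_simp; ring
      rw [e] at h; exact h
    refine le_trans (Finset.sum_le_sum step) ?_
    rw [← Finset.mul_sum]
    have hsum := sum_inv_le_log ha hn
    have hba : (0:ℝ) ≤ b - a := by linarith
    exact mul_le_mul_of_nonneg_left hsum hba
  linarith [key]

lemma Gamma_mul_pow_le {μ : ℝ} (hμ : 0 < μ) :
    ∀ k : ℕ, Real.Gamma μ * μ^k ≤ Real.Gamma (μ + k) := by
  intro k
  induction k with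
  | zero => simp
  | succ k ih =>
    have hμk : (0:ℝ) < μ + k := by positivity
    have h1 : Real.Gamma (μ + (k+1:ℕ)) = (μ + k) * Real.Gamma (μ + k) := by
      have : μ + ((k:ℝ)+1) = (μ + k) + 1 := by ring
      push_cast
      rw [this, Real.Gamma_add_one (ne_of_gt hμk)]
    rw [h1]
    have h2 : Real.Gamma μ * μ^(k+1) = μ * (Real.Gamma μ * μ^k) := by ring
    rw [h2]
    have hg : (0:ℝ) < Real.Gamma μ * μ^k := by
      have := Real.Gamma_pos_of_pos hμ; positivity
    calc μ * (Real.Gamma μ * μ^k) ≤ (μ + k) * (Real.Gamma μ * μ^k) := by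
          have hk0 : (0:ℝ) ≤ (k:ℝ) := Nat.cast_nonneg k
          apply mul_le_mul_of_nonneg_right (by linarith) (le_of_lt hg)
      _ ≤ (μ + k) * Real.Gamma (μ + k) := by
          apply mul_le_mul_of_nonneg_left ih (le_of_lt hμk)

lemma coef_bound {lam μ : ℝ} (hlam : 1 ≤ lam) (hμ : 0.462 < μ) (n : ℕ) :
    Real.Gamma μ / Real.Gamma (lam * ((n:ℝ) + 1) + μ) ≤ (1/μ)^(n+1) := by
  have hμ0 : (0:ℝ) < μ := by linarith
  have hΓμ : 0 < Real.Gamma μ := Real.Gamma_pos_of_pos hμ0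
  have h1 : (1.462:ℝ) ≤ μ + ((n:ℕ)+1:ℕ) := by
    push_cast
    have : (0:ℝ) ≤ (n:ℝ) := Nat.cast_nonneg n
    norm_num; linarith
  have h2 : μ + ((n:ℕ)+1:ℕ) ≤ lam * ((n:ℝ) + 1) + μ := by
    push_cast
    nlinarith [Nat.cast_nonneg (α := ℝ) n]
  have h3 : Real.Gamma μ * μ^(n+1) ≤ Real.Gamma (lam * ((n:ℝ) + 1) + μ) :=
    le_trans (Gamma_mul_pow_le hμ0 (n+1)) (Gamma_le_Gamma h1 h2)
  have hpos : (0:ℝ) < Real.Gamma μ * μ^(n+1) := by positivity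
  have h4 : Real.Gamma μ / Real.Gamma (lam * ((n:ℝ) + 1) + μ)
      ≤ Real.Gamma μ / (Real.Gamma μ * μ^(n+1)) := by
    apply div_le_div_of_nonneg_left (le_of_lt hΓμ) hpos h3
  refine le_trans h4 (le_of_eq ?_)
  rw [one_div, inv_pow]
  field_simp

section expsums
variable (x : ℝ)

lemma auxexp_tsum : Real.exp x = ∑' n : ℕ, x^n/(n.factorial : ℝ) := by
  rw [Real.exp_eq_exp_ℝ, NormedSpace.exp_eq_tsum_div]

lemma auxS0 : Summable (fun n : ℕ => x^(n+1)/((n+1).factorial : ℝ)) :=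
  (summable_nat_add_iff 1).2 (Real.summable_pow_div_factorial x)

lemma auxV0 : ∑' n : ℕ, x^(n+1)/((n+1).factorial : ℝ) = Real.exp x - 1 := by
  have h := Summable.tsum_eq_zero_add (Real.summable_pow_div_factorial x)
  simp only [pow_zero, Nat.factorial_zero, Nat.cast_one] at h
  rw [← auxexp_tsum] at h
  norm_num at h
  linarith

lemma auxS1 : Summable (fun n : ℕ => x^(n+1)/(n.factorial : ℝ)) := by
  have := (Real.summable_pow_div_factorial x).mul_left x
  refine this.congr (fun n => ?_)
  rw [← mul_div_assoc, ← pow_succ']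

lemma auxV1 : ∑' n : ℕ, x^(n+1)/(n.factorial : ℝ) = x * Real.exp x := by
  rw [auxexp_tsum, ← tsum_mul_left]
  congr 1; funext n
  rw [← mul_div_assoc, ← pow_succ']

lemma auxS2 : Summable (fun n : ℕ => ((n:ℝ)+1) * x^(n+1)/(n.factorial : ℝ)) := by
  have h1 := auxS1 x
  have hg : Summable (fun n : ℕ => (n:ℝ) * x^(n+1)/(n.factorial : ℝ)) := by
    refine (summable_nat_add_iff 1).1 ?_
    have := ((Real.summable_pow_div_factorial x).mul_left (x^2))
    refine this.congr (fun n => ?_)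
    push_cast
    rw [Nat.factorial_succ]
    push_cast
    have hne : ((n:ℝ)+1) ≠ 0 := by positivity
    have hfne : ((n.factorial : ℝ)) ≠ 0 := by positivity
    field_simp
    ring
  refine (hg.add h1).congr (fun n => ?_)
  field_simp

lemma auxV2 : ∑' n : ℕ, ((n:ℝ)+1) * x^(n+1)/(n.factorial : ℝ) = (x + x^2) * Real.exp x := by
  have hg : Summable (fun n : ℕ => (n:ℝ) * x^(n+1)/(n.factorial : ℝ)) := by
    refine (summable_nat_add_iff 1).1 ?_
    have := ((Real.summable_pow_div_factorial x).mul_left (x^2))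
    refine this.congr (fun n => ?_)
    push_cast
    rw [Nat.factorial_succ]
    push_cast
    have hne : ((n:ℝ)+1) ≠ 0 := by positivity
    have hfne : ((n.factorial : ℝ)) ≠ 0 := by positivity
    field_simp
    ring
  have hvg : ∑' n : ℕ, (n:ℝ) * x^(n+1)/(n.factorial : ℝ) = x^2 * Real.exp x := by
    have h := Summable.tsum_eq_zero_add hg
    simp only [Nat.cast_zero, zero_mul, zero_div, zero_add] at h
    rw [h]
    have : ∀ m : ℕ, ((m+1:ℕ):ℝ) * x^(m+1+1)/((m+1).factorial : ℝ) = x^2 * (x^m/(m.factorial:ℝ)) := by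
      intro m
      rw [Nat.factorial_succ]
      push_cast
      have hne : ((m:ℝ)+1) ≠ 0 := by positivity
      have hfne : ((m.factorial : ℝ)) ≠ 0 := by positivity
      field_simp
      ring
    rw [tsum_congr this, tsum_mul_left, ← auxexp_tsum]
  have hsum : ∀ n : ℕ, ((n:ℝ)+1) * x^(n+1)/(n.factorial : ℝ)
      = (n:ℝ) * x^(n+1)/(n.factorial : ℝ) + x^(n+1)/(n.factorial : ℝ) := by
    intro n; field_simp
  rw [tsum_congr hsum, Summable.tsum_add hg (auxS1 x), hvg, auxV1]
  ring
end expsums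

lemma part1 (lam μ α β γ : ℝ) (hlam : 1 ≤ lam) (hμ : 0.462 < μ)
    (hα0 : 0 ≤ α) (hα1 : α < 1) (hβ0 : 0 ≤ β) (hβ1 : β < 1) (hγ0 : 0 ≤ γ) (hγ1 : γ ≤ 1)
    (hcond : ((1 - α * β) * γ + (1 - α * β + (2 - (1 + β) * α) * γ) * μ) / μ ^ 2 *
      Real.exp (1 / μ) ≤ 1 - α) :
    Summable (fun n : ℕ =>
      (1 + ((n : ℝ) + 1) * γ) * (((n : ℝ) + 2) - α - ((n : ℝ) + 1) * α * β) *
        (Real.Gamma μ / Real.Gamma (lam * ((n : ℝ) + 1) + μ)) * Real.exp (-1 / μ) /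
        (Nat.factorial (n + 1) : ℝ)) ∧
    ∑' n : ℕ,
      (1 + ((n : ℝ) + 1) * γ) * (((n : ℝ) + 2) - α - ((n : ℝ) + 1) * α * β) *
        (Real.Gamma μ / Real.Gamma (lam * ((n : ℝ) + 1) + μ)) * Real.exp (-1 / μ) /
        (Nat.factorial (n + 1) : ℝ) ≤ 1 - α := by
  have hμ0 : (0:ℝ) < μ := by linarith
  set x : ℝ := 1/μ with hxdef
  have hx0 : 0 < x := by positivity
  set E : ℝ := Real.exp (-1/μ) with hE
  have hE0 : 0 < E := Real.exp_pos _
  set T : ℕ → ℝ := fun n =>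
      (1 + ((n : ℝ) + 1) * γ) * (((n : ℝ) + 2) - α - ((n : ℝ) + 1) * α * β) *
        (Real.Gamma μ / Real.Gamma (lam * ((n : ℝ) + 1) + μ)) * Real.exp (-1 / μ) /
        (Nat.factorial (n + 1) : ℝ) with hT
  set B : ℕ → ℝ := fun n =>
      (1 + ((n : ℝ) + 1) * γ) * (((n : ℝ) + 2) - α - ((n : ℝ) + 1) * α * β) *
        x^(n+1) * E / (Nat.factorial (n + 1) : ℝ) with hB
  -- basic nonneg facts
  have hw : ∀ n : ℕ, 0 ≤ (1 + ((n : ℝ) + 1) * γ) * (((n : ℝ) + 2) - α - ((n : ℝ) + 1) * α * β) := by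
    intro n
    have hn0 : (0:ℝ) ≤ (n:ℝ) := Nat.cast_nonneg n
    have h1 : 0 ≤ 1 + ((n : ℝ) + 1) * γ := by positivity
    have hαβ : α*β ≤ 1 := by nlinarith
    have h2 : 0 ≤ ((n : ℝ) + 2) - α - ((n : ℝ) + 1) * α * β := by
      have h3 : ((n:ℝ)+1) * (α*β) ≤ ((n:ℝ)+1) * 1 := by
        apply mul_le_mul_of_nonneg_left hαβ (by linarith)
      nlinarith
    exact mul_nonneg h1 h2
  have hT0 : ∀ n, 0 ≤ T n := by
    intro n
    have hΓr : 0 ≤ Real.Gamma μ / Real.Gamma (lam * ((n : ℝ) + 1) + μ) := by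
      have h1 := Real.Gamma_pos_of_pos hμ0
      have h2 : (0:ℝ) < lam * ((n : ℝ) + 1) + μ := by
        have := Nat.cast_nonneg (α := ℝ) n; nlinarith
      have := Real.Gamma_pos_of_pos h2
      positivity
    have := hw n
    have hfp : (0:ℝ) < (Nat.factorial (n + 1) : ℝ) := by positivity
    simp only [hT]
    have hEp : (0:ℝ) < Real.exp (-1/μ) := Real.exp_pos _
    positivity
  have hTB : ∀ n, T n ≤ B n := by
    intro n
    simp only [hT, hB]
    rw [← hE]
    have hfp : (0:ℝ) < (Nat.factorial (n + 1) : ℝ) := by positivity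
    have h1 := mul_le_mul_of_nonneg_left (coef_bound hlam hμ n) (hw n)
    have h2 := mul_le_mul_of_nonneg_right h1 (le_of_lt hE0)
    exact (div_le_div_iff_of_pos_right hfp).mpr h2
  -- B as linear combination
  have hBeq : ∀ n : ℕ, B n = E * ((1-α*β) * (x^(n+1)/(n.factorial:ℝ))
      + (1-α) * (x^(n+1)/((n+1).factorial:ℝ))
      + (γ*(1-α*β)) * (((n:ℝ)+1) * x^(n+1)/(n.factorial:ℝ))
      + (γ*(1-α)) * (x^(n+1)/(n.factorial:ℝ))) := by
    intro n
    simp only [hB]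
    have hfs : ((n+1).factorial : ℝ) = ((n:ℝ)+1) * (n.factorial : ℝ) := by
      rw [Nat.factorial_succ]; push_cast; ring
    rw [hfs]
    have hne : ((n:ℝ)+1) ≠ 0 := by positivity
    have hfne : (n.factorial : ℝ) ≠ 0 := by positivity
    field_simp
    ring
  have hSB : Summable B := by
    refine Summable.congr ?_ (fun n => (hBeq n).symm)
    apply Summable.mul_left
    exact ((((auxS1 x).mul_left _).add ((auxS0 x).mul_left _)).add ((auxS2 x).mul_left _)).add
      ((auxS1 x).mul_left _)
  have hST : Summable T := Summable.of_nonneg_of_le hT0 hTB hSB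
  refine ⟨hST, ?_⟩
  have hTsum : ∑' n, T n ≤ ∑' n, B n := Summable.tsum_le_tsum hTB hST hSB
  -- closed form for tsum B
  have hBsum : ∑' n, B n = E * ((1-α*β) * (x * Real.exp x)
      + (1-α) * (Real.exp x - 1)
      + (γ*(1-α*β)) * ((x + x^2) * Real.exp x)
      + (γ*(1-α)) * (x * Real.exp x)) := by
    rw [tsum_congr hBeq, tsum_mul_left]
    congr 1
    rw [Summable.tsum_add (((((auxS1 x).mul_left _).add ((auxS0 x).mul_left _))).add ((auxS2 x).mul_left _))
        ((auxS1 x).mul_left _),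
      Summable.tsum_add (((auxS1 x).mul_left _).add ((auxS0 x).mul_left _)) ((auxS2 x).mul_left _),
      Summable.tsum_add ((auxS1 x).mul_left _) ((auxS0 x).mul_left _),
      tsum_mul_left, tsum_mul_left, tsum_mul_left, tsum_mul_left, auxV0, auxV1, auxV2]
  rw [hBsum] at hTsum
  refine le_trans hTsum ?_
  -- final numeric step
  have hEeq : E = (Real.exp (1/μ))⁻¹ := by
    rw [hE, ← Real.exp_neg]
    ring_nf
  set P : ℝ := Real.exp (1/μ) with hP
  have hP0 : 0 < P := Real.exp_pos _
  have hxP : Real.exp x = P := by rw [hxdef, hP]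
  rw [hEeq]
  rw [inv_mul_le_iff₀ hP0]
  have hq : (1-α*β)*x + γ*(1-α*β)*(x+x^2) + γ*(1-α)*x
      = ((1 - α * β) * γ + (1 - α * β + (2 - (1 + β) * α) * γ) * μ) / μ ^ 2 := by
    rw [hxdef]
    field_simp
    ring
  have hcond' : ((1-α*β)*x + γ*(1-α*β)*(x+x^2) + γ*(1-α)*x) * P ≤ 1 - α := by
    rw [hq]; exact hcond
  nlinarith [hcond', hP0, hα1]

lemma pow_sq_bound (n : ℕ) : ((n:ℝ)+2)^2 ≤ 4 * 4^n := by
  have h : (n:ℝ) + 2 ≤ 2 * 2^n := by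
    induction n with
    | zero => norm_num
    | succ k ih =>
      push_cast
      have h2 : (1:ℝ) ≤ 2^k := one_le_pow₀ (by norm_num)
      push_cast at ih
      rw [pow_succ]
      nlinarith
  have h0 : (0:ℝ) ≤ (n:ℝ) + 2 := by positivity
  calc ((n:ℝ)+2)^2 ≤ (2*2^n)^2 := by nlinarith
    _ = 4 * 4^n := by rw [mul_pow, ← pow_mul]; norm_num; rw [show (2:ℝ)^(n*2) = (2^2)^n by rw [← pow_mul]; ring_nf]; norm_num

lemma master_summable {ρ : ℝ} (hρ : 0 ≤ ρ) :
    Summable (fun n : ℕ => ((n:ℝ)+2)^2 * ρ^n / (n.factorial : ℝ)) := by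
  refine Summable.of_nonneg_of_le (fun n => by positivity) (fun n => ?_)
    (((Real.summable_pow_div_factorial (4*ρ)).mul_left 4))
  have h := pow_sq_bound n
  have hfp : (0:ℝ) < (n.factorial : ℝ) := by positivity
  rw [div_le_iff₀ hfp]
  have expand : 4 * ((4*ρ)^n/(n.factorial:ℝ)) * (n.factorial:ℝ) = 4 * (4^n * ρ^n) := by
    rw [mul_pow]; field_simp
  rw [expand]
  have : ((n:ℝ)+2)^2 * ρ^n ≤ (4*4^n) * ρ^n :=
    mul_le_mul_of_nonneg_right h (by positivity)
  nlinarith [this]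

-- first-layer derivative
lemma tsum_hasDerivAt1 (C : ℕ → ℂ)
    (hsum : Summable (fun n : ℕ => ‖C n‖ * (((n:ℝ)+2) * 2^(n+1))))
    {z : ℂ} (hz : z ∈ Metric.ball (0:ℂ) 2) :
    HasDerivAt (fun w => ∑' n : ℕ, C n * w^(n+2))
      (∑' n : ℕ, C n * (((n:ℂ)+2) * z^(n+1))) z := by
  refine hasDerivAt_tsum_of_isPreconnected (𝕜 := ℂ) (F := ℂ)
    (g := fun n w => C n * w^(n+2)) (g' := fun n w => C n * (((n:ℂ)+2) * w^(n+1)))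
    hsum Metric.isOpen_ball
    (convex_ball (0:ℂ) 2).isPreconnected
    (fun n y _ => ?_) (fun n y hy => ?_) (Metric.mem_ball_self (by norm_num)) ?_ hz
  · have h := (hasDerivAt_pow (n+2) y).const_mul (C n)
    refine h.congr_deriv ?_
    rw [show n + 2 - 1 = n + 1 by omega]
    push_cast
    ring
  · rw [norm_mul, norm_mul, norm_pow]
    have hy2 : ‖y‖ < 2 := by simpa [Complex.dist_eq] using hy
    have h1 : ‖((n:ℂ)+2)‖ = (n:ℝ)+2 := by
      have : ((n:ℂ)+2) = ((n+2 : ℕ) : ℂ) := by push_cast; ring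
      rw [this, Complex.norm_natCast]; push_cast; ring
    rw [h1]
    have h2 : ‖y‖^(n+1) ≤ 2^(n+1) :=
      pow_le_pow_left₀ (norm_nonneg y) (le_of_lt hy2) (n+1)
    have h3 : (0:ℝ) ≤ (n:ℝ)+2 := by positivity
    have := mul_le_mul_of_nonneg_left h2 h3
    have h4 : (0:ℝ) ≤ ‖C n‖ := norm_nonneg _
    calc ‖C n‖ * (((n:ℝ)+2) * ‖y‖^(n+1)) ≤ ‖C n‖ * (((n:ℝ)+2) * 2^(n+1)) := by
          apply mul_le_mul_of_nonneg_left this h4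
      _ = _ := rfl
  · refine (summable_zero).congr (fun n => ?_)
    simp

-- second-layer derivative
lemma tsum_hasDerivAt2 (C : ℕ → ℂ)
    (hsum : Summable (fun n : ℕ => ‖C n‖ * ((((n:ℝ)+2) * ((n:ℝ)+1)) * 2^n)))
    {z : ℂ} (hz : z ∈ Metric.ball (0:ℂ) 2) :
    HasDerivAt (fun w => ∑' n : ℕ, C n * (((n:ℂ)+2) * w^(n+1)))
      (∑' n : ℕ, C n * (((n:ℂ)+2) * (((n:ℂ)+1) * z^n))) z := by
  refine hasDerivAt_tsum_of_isPreconnected (𝕜 := ℂ) (F := ℂ)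
    (g := fun n w => C n * (((n:ℂ)+2) * w^(n+1)))
    (g' := fun n w => C n * (((n:ℂ)+2) * (((n:ℂ)+1) * w^n)))
    hsum Metric.isOpen_ball
    (convex_ball (0:ℂ) 2).isPreconnected
    (fun n y _ => ?_) (fun n y hy => ?_) (Metric.mem_ball_self (by norm_num)) ?_ hz
  · have h := (hasDerivAt_pow (n+1) y).const_mul (C n * ((n:ℂ)+2))
    have e1 : (fun w => C n * ((n:ℂ)+2) * w^(n+1)) = (fun w => C n * (((n:ℂ)+2) * w^(n+1))) := by
      funext w; ring
    rw [e1] at h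
    refine h.congr_deriv ?_
    rw [show n + 1 - 1 = n by omega]
    push_cast
    ring
  · rw [norm_mul, norm_mul, norm_mul, norm_pow]
    have hy2 : ‖y‖ < 2 := by simpa [Complex.dist_eq] using hy
    have h1 : ‖((n:ℂ)+2)‖ = (n:ℝ)+2 := by
      have : ((n:ℂ)+2) = ((n+2 : ℕ) : ℂ) := by push_cast; ring
      rw [this, Complex.norm_natCast]; push_cast; ring
    have h1' : ‖((n:ℂ)+1)‖ = (n:ℝ)+1 := by
      have : ((n:ℂ)+1) = ((n+1 : ℕ) : ℂ) := by push_cast; ring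
      rw [this, Complex.norm_natCast]; push_cast; ring
    rw [h1, h1']
    have h2 : ‖y‖^n ≤ 2^n := pow_le_pow_left₀ (norm_nonneg y) (le_of_lt hy2) n
    have h4 : (0:ℝ) ≤ ‖C n‖ := norm_nonneg _
    calc ‖C n‖ * (((n:ℝ)+2) * (((n:ℝ)+1) * ‖y‖^n))
        ≤ ‖C n‖ * (((n:ℝ)+2) * (((n:ℝ)+1) * 2^n)) := by
          apply mul_le_mul_of_nonneg_left ?_ h4
          apply mul_le_mul_of_nonneg_left ?_ (by positivity)
          apply mul_le_mul_of_nonneg_left h2 (by positivity)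
      _ = ‖C n‖ * ((((n:ℝ)+2) * ((n:ℝ)+1)) * 2^n) := by ring
  · refine (summable_zero).congr (fun n => ?_)
    simp

section part2
variable (lam μ α β γ : ℝ)

noncomputable def cfun (n : ℕ) : ℝ :=
  Real.Gamma μ / Real.Gamma (lam * ((n : ℝ) + 1) + μ) * Real.exp (-1 / μ) /
      (Nat.factorial (n + 1) : ℝ)

noncomputable def Cc (n : ℕ) : ℂ := ((cfun lam μ n : ℝ) : ℂ)

lemma hFeq : Ffun lam μ = fun z => z + ∑' n : ℕ, Cc lam μ n * z ^ (n+2) := rfl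

variable {lam μ}

lemma cfun_pos (hlam : 1 ≤ lam) (hμ : 0.462 < μ) (n : ℕ) : 0 < cfun lam μ n := by
  unfold cfun
  have hμ0 : (0:ℝ) < μ := by linarith
  have h1 := Real.Gamma_pos_of_pos hμ0
  have h2 : (0:ℝ) < lam * ((n : ℝ) + 1) + μ := by
    have := Nat.cast_nonneg (α := ℝ) n; nlinarith
  have h3 := Real.Gamma_pos_of_pos h2
  have h4 : (0:ℝ) < Real.exp (-1/μ) := Real.exp_pos _
  positivity

lemma cfun_le (hlam : 1 ≤ lam) (hμ : 0.462 < μ) (n : ℕ) :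
    cfun lam μ n ≤ (Real.exp (-1/μ) / μ) * (μ⁻¹)^n / (n.factorial : ℝ) := by
  unfold cfun
  have hμ0 : (0:ℝ) < μ := by linarith
  have hE : (0:ℝ) < Real.exp (-1/μ) := Real.exp_pos _
  have h1 := coef_bound hlam hμ n
  have hf1 : (n.factorial : ℝ) ≤ ((n+1).factorial : ℝ) := by
    exact_mod_cast Nat.factorial_le (Nat.le_succ n)
  have hfp : (0:ℝ) < (n.factorial : ℝ) := by positivity
  have hfp1 : (0:ℝ) < ((n+1).factorial : ℝ) := by positivity
  have step1 : Real.Gamma μ / Real.Gamma (lam * ((n : ℝ) + 1) + μ) * Real.exp (-1 / μ) /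
      ((n+1).factorial : ℝ) ≤ (1/μ)^(n+1) * Real.exp (-1/μ) / ((n+1).factorial : ℝ) :=
    (div_le_div_iff_of_pos_right hfp1).mpr (mul_le_mul_of_nonneg_right h1 (le_of_lt hE))
  refine le_trans step1 ?_
  rw [div_le_div_iff₀ hfp1 hfp]
  have e1 : (1/μ)^(n+1) * Real.exp (-1/μ) * (n.factorial:ℝ)
      = (Real.exp (-1/μ)/μ * (μ⁻¹)^n) * (n.factorial:ℝ) := by
    rw [pow_succ, one_div]
    field_simp
  rw [e1]
  exact mul_le_mul_of_nonneg_left hf1 (by positivity)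
end part2

section part2main
variable {lam μ α β γ : ℝ}

set_option maxHeartbeats 2000000 in
theorem part2 (hlam : 1 ≤ lam) (hμ : 0.462 < μ)
    (hα0 : 0 ≤ α) (hα1 : α < 1) (hβ0 : 0 ≤ β) (hβ1 : β < 1) (hγ0 : 0 ≤ γ) (hγ1 : γ ≤ 1)
    (hST : Summable (fun n : ℕ =>
      (1 + ((n : ℝ) + 1) * γ) * (((n : ℝ) + 2) - α - ((n : ℝ) + 1) * α * β) *
        (Real.Gamma μ / Real.Gamma (lam * ((n : ℝ) + 1) + μ)) * Real.exp (-1 / μ) /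
        (Nat.factorial (n + 1) : ℝ)))
    (hTle : ∑' n : ℕ,
      (1 + ((n : ℝ) + 1) * γ) * (((n : ℝ) + 2) - α - ((n : ℝ) + 1) * α * β) *
        (Real.Gamma μ / Real.Gamma (lam * ((n : ℝ) + 1) + μ)) * Real.exp (-1 / μ) /
        (Nat.factorial (n + 1) : ℝ) ≤ 1 - α) :
    ∀ z ∈ Metric.ball (0 : ℂ) 1, z ≠ 0 →
      α < (((z * deriv (Ffun lam μ) z + (γ : ℂ) * z ^ 2 * deriv (deriv (Ffun lam μ)) z) /
        ((γ : ℂ) * z * (deriv (Ffun lam μ) z + (β : ℂ) * z * deriv (deriv (Ffun lam μ)) z) +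
          (1 - (γ : ℂ)) * ((β : ℂ) * z * deriv (Ffun lam μ) z +
            (1 - (β : ℂ)) * Ffun lam μ z))).re) := by
  have hμ0 : (0:ℝ) < μ := by linarith
  set c : ℕ → ℝ := cfun lam μ with hc
  set C : ℕ → ℂ := Cc lam μ with hC
  have hc0 : ∀ n, 0 < c n := fun n => cfun_pos hlam hμ n
  set K : ℝ := Real.exp (-1/μ) / μ with hK
  have hK0 : 0 < K := by
    have := Real.exp_pos (-1/μ); positivity
  have hcb : ∀ n, c n ≤ K * (μ⁻¹)^n / (n.factorial : ℝ) := fun n => cfun_le hlam hμ n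
  have normC : ∀ n, ‖C n‖ = c n := by
    intro n
    simp only [hC, Cc, Complex.norm_real]
    exact _root_.abs_of_pos (hc0 n)
  have hmaster2 : Summable (fun n : ℕ => ((n:ℝ)+2)^2 * (2/μ)^n / (n.factorial : ℝ)) :=
    master_summable (by positivity)
  have hmaster1 : Summable (fun n : ℕ => ((n:ℝ)+2)^2 * (μ⁻¹)^n / (n.factorial : ℝ)) :=
    master_summable (by positivity)
  -- generic bound
  have hbnd : ∀ (n : ℕ) (w : ℝ), 0 ≤ w → w ≤ ((n:ℝ)+2)^2 * 2^n * 2 →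
      c n * w ≤ (2*K)*(((n:ℝ)+2)^2*(2/μ)^n/(n.factorial:ℝ)) := by
    intro n w hw0 hwle
    have h1 : c n * w ≤ (K * (μ⁻¹)^n / (n.factorial:ℝ)) * w :=
      mul_le_mul_of_nonneg_right (hcb n) hw0
    refine le_trans h1 ?_
    have h2 : (K * (μ⁻¹)^n / (n.factorial:ℝ)) * w
        ≤ (K * (μ⁻¹)^n / (n.factorial:ℝ)) * (((n:ℝ)+2)^2 * 2^n * 2) := by
      apply mul_le_mul_of_nonneg_left hwle (by positivity)
    refine le_trans h2 (le_of_eq ?_)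
    have e2 : (2/μ)^n = 2^n * (μ⁻¹)^n := by
      rw [div_eq_mul_inv, mul_pow]
    rw [e2]
    field_simp
  have hsqc : Summable (fun n : ℕ => ((n:ℝ)+2)^2 * c n) := by
    refine Summable.of_nonneg_of_le
      (fun n => mul_nonneg (by positivity) (le_of_lt (hc0 n))) (fun n => ?_)
      (hmaster1.mul_left K)
    have h := hcb n
    calc ((n:ℝ)+2)^2 * c n ≤ ((n:ℝ)+2)^2 * (K * (μ⁻¹)^n / (n.factorial:ℝ)) :=
          mul_le_mul_of_nonneg_left h (by positivity)
      _ = K * (((n:ℝ)+2)^2 * (μ⁻¹)^n / (n.factorial : ℝ)) := by ring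
  have hs1 : Summable (fun n : ℕ => ‖C n‖ * (((n:ℝ)+2) * 2^(n+1))) := by
    refine Summable.of_nonneg_of_le (fun n => by positivity) (fun n => ?_)
      (hmaster2.mul_left (2*K))
    rw [normC]
    refine hbnd n _ (by positivity) ?_
    rw [pow_succ]
    have hn2 : (1:ℝ) ≤ (n:ℝ)+2 := by
      have := Nat.cast_nonneg (α := ℝ) n; linarith
    have h2 : ((n:ℝ)+2) ≤ ((n:ℝ)+2)^2 := by nlinarith
    have h3 : (0:ℝ) ≤ 2^n := by positivity
    nlinarith [h3]
  have hs2 : Summable (fun n : ℕ => ‖C n‖ * ((((n:ℝ)+2) * ((n:ℝ)+1)) * 2^n)) := by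
    refine Summable.of_nonneg_of_le (fun n => by positivity) (fun n => ?_)
      (hmaster2.mul_left (2*K))
    rw [normC]
    refine hbnd n _ (by positivity) ?_
    have hn0 : (0:ℝ) ≤ (n:ℝ) := Nat.cast_nonneg n
    have h3 : (0:ℝ) ≤ 2^n := by positivity
    have h2 : ((n:ℝ)+2) * ((n:ℝ)+1) ≤ ((n:ℝ)+2)^2 * 2 := by nlinarith
    nlinarith [h3, h2]
  -- real coefficient sequences
  set κ : ℕ → ℝ := fun n => (1+((n:ℝ)+1)*γ)*(((n:ℝ)+1)*(1-β)) with hκ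
  set e2 : ℕ → ℝ := fun n => (1+β*((n:ℝ)+1))*(1+((n:ℝ)+1)*γ) with he2
  set re1 : ℕ → ℝ := fun n => (((n:ℝ)+2)*(1+((n:ℝ)+1)*γ)) with hre1
  have hκ0 : ∀ n, 0 ≤ κ n := by
    intro n
    have hn0 : (0:ℝ) ≤ (n:ℝ) := Nat.cast_nonneg n
    simp only [hκ]
    have h1 : (0:ℝ) ≤ 1+((n:ℝ)+1)*γ := by positivity
    exact mul_nonneg h1 (mul_nonneg (by linarith) (by linarith))
  have he20 : ∀ n, 0 ≤ e2 n := by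
    intro n
    have hn0 : (0:ℝ) ≤ (n:ℝ) := Nat.cast_nonneg n
    simp only [he2]
    positivity
  have hre10 : ∀ n, 0 ≤ re1 n := by
    intro n
    have hn0 : (0:ℝ) ≤ (n:ℝ) := Nat.cast_nonneg n
    simp only [hre1]
    positivity
  have hκsq : ∀ n, κ n ≤ ((n:ℝ)+2)^2 := by
    intro n
    have hn0 : (0:ℝ) ≤ (n:ℝ) := Nat.cast_nonneg n
    simp only [hκ]
    nlinarith [mul_nonneg hn0 hγ0, mul_nonneg (mul_nonneg hn0 hn0) hγ0,
      mul_nonneg hn0 hβ0, mul_nonneg (mul_nonneg hn0 hγ0) hβ0]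
  have he2sq : ∀ n, e2 n ≤ ((n:ℝ)+2)^2 := by
    intro n
    have hn0 : (0:ℝ) ≤ (n:ℝ) := Nat.cast_nonneg n
    simp only [he2]
    have h1 : 1+β*((n:ℝ)+1) ≤ (n:ℝ)+2 := by nlinarith
    have h2 : 1+((n:ℝ)+1)*γ ≤ (n:ℝ)+2 := by nlinarith
    have h3 : (0:ℝ) ≤ 1+β*((n:ℝ)+1) := by positivity
    nlinarith
  have hre1sq : ∀ n, re1 n ≤ ((n:ℝ)+2)^2 := by
    intro n
    have hn0 : (0:ℝ) ≤ (n:ℝ) := Nat.cast_nonneg n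
    simp only [hre1]
    have h2 : 1+((n:ℝ)+1)*γ ≤ (n:ℝ)+2 := by nlinarith
    nlinarith
  -- real summabilities
  have hS1R : Summable (fun n => κ n * c n) := by
    refine Summable.of_nonneg_of_le
      (fun n => mul_nonneg (hκ0 n) (le_of_lt (hc0 n))) (fun n => ?_) hsqc
    exact mul_le_mul_of_nonneg_right (hκsq n) (le_of_lt (hc0 n))
  have hS2R : Summable (fun n => e2 n * c n) := by
    refine Summable.of_nonneg_of_le
      (fun n => mul_nonneg (he20 n) (le_of_lt (hc0 n))) (fun n => ?_) hsqc
    exact mul_le_mul_of_nonneg_right (he2sq n) (le_of_lt (hc0 n))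
  -- key inequality from part 1
  have hTn : ∀ n : ℕ,
      (1 + ((n : ℝ) + 1) * γ) * (((n : ℝ) + 2) - α - ((n : ℝ) + 1) * α * β) *
        (Real.Gamma μ / Real.Gamma (lam * ((n : ℝ) + 1) + μ)) * Real.exp (-1 / μ) /
        (Nat.factorial (n + 1) : ℝ) = κ n * c n + (1-α)*(e2 n * c n) := by
    intro n
    simp only [hκ, he2, hc]
    unfold cfun
    ring
  have hkey : (∑' n, κ n * c n) + (1-α) * (∑' n, e2 n * c n) ≤ 1 - α := by
    rw [← tsum_mul_left, ← Summable.tsum_add hS1R (hS2R.mul_left (1-α))]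
    rw [tsum_congr hTn] at hTle
    exact hTle
  set Sig1 : ℝ := ∑' n, κ n * c n with hSig1
  set Sig2 : ℝ := ∑' n, e2 n * c n with hSig2
  have hSig1pos : 0 < Sig1 := by
    refine Summable.tsum_pos hS1R (fun n => mul_nonneg (hκ0 n) (le_of_lt (hc0 n))) 0 ?_
    have h := hc0 0
    have : (0:ℝ) < κ 0 := by
      simp only [hκ]
      push_cast
      nlinarith
    exact mul_pos this h
  have hSig20 : 0 ≤ Sig2 := tsum_nonneg (fun n => mul_nonneg (he20 n) (le_of_lt (hc0 n)))
  have hSig21 : Sig2 < 1 := by nlinarith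
  -- now fix z
  intro z hz hz0
  have hz2 : z ∈ Metric.ball (0:ℂ) 2 := by
    rw [Metric.mem_ball] at *
    linarith
  have hρ1 : ‖z‖ < 1 := by rwa [mem_ball_zero_iff] at hz
  have hρ0 : (0:ℝ) < ‖z‖ := norm_pos_iff.mpr hz0
  -- derivatives
  have hDF : ∀ w ∈ Metric.ball (0:ℂ) 2, HasDerivAt (Ffun lam μ)
      (1 + ∑' n : ℕ, C n * (((n:ℂ)+2) * w^(n+1))) w := by
    intro w hw
    rw [hFeq lam μ]
    exact (hasDerivAt_id w).add (tsum_hasDerivAt1 C hs1 hw)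
  have hderivF : ∀ w ∈ Metric.ball (0:ℂ) 2, deriv (Ffun lam μ) w
      = 1 + ∑' n : ℕ, C n * (((n:ℂ)+2) * w^(n+1)) := fun w hw => (hDF w hw).deriv
  have hF2 : deriv (deriv (Ffun lam μ)) z
      = ∑' n : ℕ, C n * (((n:ℂ)+2) * (((n:ℂ)+1) * z^n)) := by
    have hev : deriv (Ffun lam μ) =ᶠ[nhds z]
        (fun w => 1 + ∑' n : ℕ, C n * (((n:ℂ)+2) * w^(n+1))) :=
      Filter.eventuallyEq_of_mem (Metric.isOpen_ball.mem_nhds hz2) hderivF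
    rw [hev.deriv_eq, deriv_const_add]
    exact (tsum_hasDerivAt2 C hs2 hz2).deriv
  set S0 : ℂ := ∑' n : ℕ, C n * z^(n+2) with hS0
  set A1 : ℂ := ∑' n : ℕ, C n * (((n:ℂ)+2) * z^(n+1)) with hA1
  set A2 : ℂ := ∑' n : ℕ, C n * (((n:ℂ)+2) * (((n:ℂ)+1) * z^n)) with hA2
  have hFz : Ffun lam μ z = z + S0 := by rw [hFeq lam μ]
  have hF1z : deriv (Ffun lam μ) z = 1 + A1 := hderivF z hz2
  have hF2z : deriv (deriv (Ffun lam μ)) z = A2 := hF2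
  -- complex summabilities at z
  have hz1le : ‖z‖ ≤ 1 := le_of_lt hρ1
  have hz2le : ‖z‖ ≤ 2 := by linarith
  have st0 : Summable (fun n : ℕ => C n * z^(n+2)) := by
    refine Summable.of_norm (Summable.of_nonneg_of_le (fun n => norm_nonneg _)
      (fun n => ?_) hsqc)
    rw [norm_mul, normC, norm_pow]
    have h1 : ‖z‖^(n+2) ≤ 1 := pow_le_one₀ (norm_nonneg z) hz1le
    have h2 : (1:ℝ) ≤ ((n:ℝ)+2)^2 := by nlinarith [Nat.cast_nonneg (α := ℝ) n]
    calc c n * ‖z‖^(n+2) ≤ c n * 1 := mul_le_mul_of_nonneg_left h1 (le_of_lt (hc0 n))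
      _ ≤ ((n:ℝ)+2)^2 * c n := by nlinarith [hc0 n]
  have st1 : Summable (fun n : ℕ => C n * (((n:ℂ)+2) * z^(n+1))) := by
    refine Summable.of_norm (Summable.of_nonneg_of_le (fun n => norm_nonneg _)
      (fun n => ?_) hs1)
    rw [norm_mul, norm_mul, norm_pow]
    have h1 : ‖((n:ℂ)+2)‖ = (n:ℝ)+2 := by
      have e : ((n:ℂ)+2) = ((n+2 : ℕ) : ℂ) := by push_cast; ring
      rw [e, Complex.norm_natCast]; push_cast; ring
    rw [h1]
    apply mul_le_mul_of_nonneg_left ?_ (norm_nonneg _)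
    apply mul_le_mul_of_nonneg_left ?_ (by positivity)
    exact pow_le_pow_left₀ (norm_nonneg z) hz2le (n+1)
  have st2 : Summable (fun n : ℕ => C n * (((n:ℂ)+2) * (((n:ℂ)+1) * z^n))) := by
    refine Summable.of_norm (Summable.of_nonneg_of_le (fun n => norm_nonneg _)
      (fun n => ?_) hs2)
    rw [norm_mul, norm_mul, norm_mul, norm_pow]
    have h1 : ‖((n:ℂ)+2)‖ = (n:ℝ)+2 := by
      have e : ((n:ℂ)+2) = ((n+2 : ℕ) : ℂ) := by push_cast; ring
      rw [e, Complex.norm_natCast]; push_cast; ring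
    have h1' : ‖((n:ℂ)+1)‖ = (n:ℝ)+1 := by
      have e : ((n:ℂ)+1) = ((n+1 : ℕ) : ℂ) := by push_cast; ring
      rw [e, Complex.norm_natCast]; push_cast; ring
    rw [h1, h1']
    have h2 : ‖z‖^n ≤ 2^n := pow_le_pow_left₀ (norm_nonneg z) hz2le n
    calc ‖C n‖ * (((n:ℝ)+2) * (((n:ℝ)+1) * ‖z‖^n))
        ≤ ‖C n‖ * (((n:ℝ)+2) * (((n:ℝ)+1) * 2^n)) := by
          apply mul_le_mul_of_nonneg_left ?_ (norm_nonneg _)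
          apply mul_le_mul_of_nonneg_left ?_ (by positivity)
          apply mul_le_mul_of_nonneg_left h2 (by positivity)
      _ = ‖C n‖ * ((((n:ℝ)+2) * ((n:ℝ)+1)) * 2^n) := by ring
  -- P and Q series
  set P : ℕ → ℂ := fun n => (C n * z^(n+2)) * ((re1 n : ℝ) : ℂ) with hP
  set Q : ℕ → ℂ := fun n => (C n * z^(n+2)) * ((e2 n : ℝ) : ℂ) with hQ
  have normP : ∀ n, ‖P n‖ = re1 n * (c n * ‖z‖^(n+2)) := by
    intro n
    simp only [hP]
    rw [norm_mul, norm_mul, normC, norm_pow, Complex.norm_real, Real.norm_eq_abs, _root_.abs_of_nonneg (hre10 n)]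
    ring
  have normQ : ∀ n, ‖Q n‖ = e2 n * (c n * ‖z‖^(n+2)) := by
    intro n
    simp only [hQ]
    rw [norm_mul, norm_mul, normC, norm_pow, Complex.norm_real, Real.norm_eq_abs, _root_.abs_of_nonneg (he20 n)]
    ring
  have sP : Summable P := by
    refine Summable.of_norm (Summable.of_nonneg_of_le (fun n => norm_nonneg _)
      (fun n => ?_) hsqc)
    rw [normP n]
    have h1 : ‖z‖^(n+2) ≤ 1 := pow_le_one₀ (norm_nonneg z) hz1le
    have h2 : c n * ‖z‖^(n+2) ≤ c n := by nlinarith [hc0 n, pow_nonneg (norm_nonneg z) (n+2)]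
    calc re1 n * (c n * ‖z‖^(n+2)) ≤ re1 n * c n :=
          mul_le_mul_of_nonneg_left h2 (hre10 n)
      _ ≤ ((n:ℝ)+2)^2 * c n := mul_le_mul_of_nonneg_right (hre1sq n) (le_of_lt (hc0 n))
  have sQ : Summable Q := by
    refine Summable.of_norm (Summable.of_nonneg_of_le (fun n => norm_nonneg _)
      (fun n => ?_) hsqc)
    rw [normQ n]
    have h1 : ‖z‖^(n+2) ≤ 1 := pow_le_one₀ (norm_nonneg z) hz1le
    have h2 : c n * ‖z‖^(n+2) ≤ c n := by nlinarith [hc0 n, pow_nonneg (norm_nonneg z) (n+2)]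
    calc e2 n * (c n * ‖z‖^(n+2)) ≤ e2 n * c n :=
          mul_le_mul_of_nonneg_left h2 (he20 n)
      _ ≤ ((n:ℝ)+2)^2 * c n := mul_le_mul_of_nonneg_right (he2sq n) (le_of_lt (hc0 n))
  -- numerator and denominator values
  set Nv : ℂ := z * deriv (Ffun lam μ) z + (γ : ℂ) * z ^ 2 * deriv (deriv (Ffun lam μ)) z with hNv
  set Dv : ℂ := (γ : ℂ) * z * (deriv (Ffun lam μ) z + (β : ℂ) * z * deriv (deriv (Ffun lam μ)) z) +
          (1 - (γ : ℂ)) * ((β : ℂ) * z * deriv (Ffun lam μ) z + (1 - (β : ℂ)) * Ffun lam μ z) with hDv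
  have hNval : Nv = z + ∑' n, P n := by
    rw [hNv, hF1z, hF2z]
    have h1 : ∑' n : ℕ, (z * (C n * (((n:ℂ)+2) * z^(n+1)))
        + ((γ:ℂ)*z^2) * (C n * (((n:ℂ)+2) * (((n:ℂ)+1) * z^n))))
        = z*A1 + ((γ:ℂ)*z^2)*A2 := by
      rw [Summable.tsum_add (st1.mul_left z) (st2.mul_left _), tsum_mul_left, tsum_mul_left, hA1, hA2]
    have h2 : ∀ n : ℕ, (z * (C n * (((n:ℂ)+2) * z^(n+1)))
        + ((γ:ℂ)*z^2) * (C n * (((n:ℂ)+2) * (((n:ℂ)+1) * z^n)))) = P n := by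
      intro n
      simp only [hP, hre1]
      push_cast
      ring
    rw [← tsum_congr h2, h1]
    ring
  have hDval : Dv = z + ∑' n, Q n := by
    rw [hDv, hF1z, hF2z, hFz]
    have h1 : ∑' n : ℕ, ((((γ:ℂ)*z + (1-(γ:ℂ))*(β:ℂ)*z) * (C n * (((n:ℂ)+2) * z^(n+1))))
        + (((γ:ℂ)*(β:ℂ)*z^2) * (C n * (((n:ℂ)+2) * (((n:ℂ)+1) * z^n))))
        + (((1-(γ:ℂ))*(1-(β:ℂ))) * (C n * z^(n+2))))
        = ((γ:ℂ)*z + (1-(γ:ℂ))*(β:ℂ)*z)*A1 + ((γ:ℂ)*(β:ℂ)*z^2)*A2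
          + ((1-(γ:ℂ))*(1-(β:ℂ)))*S0 := by
      rw [Summable.tsum_add (Summable.add (st1.mul_left _) (st2.mul_left _)) (st0.mul_left _),
        Summable.tsum_add (st1.mul_left _) (st2.mul_left _),
        tsum_mul_left, tsum_mul_left, tsum_mul_left, hA1, hA2, hS0]
    have h2 : ∀ n : ℕ, ((((γ:ℂ)*z + (1-(γ:ℂ))*(β:ℂ)*z) * (C n * (((n:ℂ)+2) * z^(n+1))))
        + (((γ:ℂ)*(β:ℂ)*z^2) * (C n * (((n:ℂ)+2) * (((n:ℂ)+1) * z^n))))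
        + (((1-(γ:ℂ))*(1-(β:ℂ))) * (C n * z^(n+2)))) = Q n := by
      intro n
      simp only [hQ, he2]
      push_cast
      ring
    rw [← tsum_congr h2, h1]
    ring
  -- difference
  have hdiff : Nv - Dv = ∑' n, (P n - Q n) := by
    rw [hNval, hDval, Summable.tsum_sub sP sQ]
    ring
  have hPQ : ∀ n : ℕ, P n - Q n = (C n * z^(n+2)) * ((κ n : ℝ) : ℂ) := by
    intro n
    simp only [hP, hQ, hκ, hre1, he2]
    push_cast
    ring
  have normPQ : ∀ n, ‖P n - Q n‖ = κ n * (c n * ‖z‖^(n+2)) := by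
    intro n
    rw [hPQ n, norm_mul, norm_mul, normC, norm_pow, Complex.norm_real, Real.norm_eq_abs, _root_.abs_of_nonneg (hκ0 n)]
    ring
  have sPQ : Summable (fun n => P n - Q n) := sP.sub sQ
  have snormPQ : Summable (fun n => κ n * (c n * ‖z‖^(n+2))) := by
    refine Summable.of_nonneg_of_le (fun n => mul_nonneg (hκ0 n)
      (mul_nonneg (le_of_lt (hc0 n)) (pow_nonneg (norm_nonneg z) _))) (fun n => ?_) hsqc
    have h1 : ‖z‖^(n+2) ≤ 1 := pow_le_one₀ (norm_nonneg z) hz1le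
    have h2 : c n * ‖z‖^(n+2) ≤ c n := by
      nlinarith [hc0 n, pow_nonneg (norm_nonneg z) (n+2)]
    calc κ n * (c n * ‖z‖^(n+2)) ≤ κ n * c n := mul_le_mul_of_nonneg_left h2 (hκ0 n)
      _ ≤ ((n:ℝ)+2)^2 * c n := mul_le_mul_of_nonneg_right (hκsq n) (le_of_lt (hc0 n))
  have snormQ : Summable (fun n => e2 n * (c n * ‖z‖^(n+2))) := by
    refine Summable.of_nonneg_of_le (fun n => mul_nonneg (he20 n)
      (mul_nonneg (le_of_lt (hc0 n)) (pow_nonneg (norm_nonneg z) _))) (fun n => ?_) hsqc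
    have h1 : ‖z‖^(n+2) ≤ 1 := pow_le_one₀ (norm_nonneg z) hz1le
    have h2 : c n * ‖z‖^(n+2) ≤ c n := by
      nlinarith [hc0 n, pow_nonneg (norm_nonneg z) (n+2)]
    calc e2 n * (c n * ‖z‖^(n+2)) ≤ e2 n * c n := mul_le_mul_of_nonneg_left h2 (he20 n)
      _ ≤ ((n:ℝ)+2)^2 * c n := mul_le_mul_of_nonneg_right (he2sq n) (le_of_lt (hc0 n))
  have hNDnorm : ‖Nv - Dv‖ ≤ ∑' n, κ n * (c n * ‖z‖^(n+2)) := by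
    rw [hdiff]
    refine le_trans (norm_tsum_le_tsum_norm ?_) (le_of_eq (tsum_congr normPQ))
    exact snormPQ.congr (fun n => (normPQ n).symm)
  have hstrict : ∑' n, κ n * (c n * ‖z‖^(n+2)) < ‖z‖ * Sig1 := by
    have heq : ‖z‖ * Sig1 = ∑' n, ‖z‖ * (κ n * c n) := by rw [tsum_mul_left]
    rw [heq]
    refine Summable.tsum_lt_tsum (i := 0) (fun n => ?_) ?_ snormPQ (hS1R.mul_left _)
    · have h1 : ‖z‖^(n+2) ≤ ‖z‖ := by
        calc ‖z‖^(n+2) ≤ ‖z‖^1 := pow_le_pow_of_le_one (norm_nonneg z) hz1le (by omega)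
          _ = ‖z‖ := pow_one _
      have h2 : c n * ‖z‖^(n+2) ≤ c n * ‖z‖ := mul_le_mul_of_nonneg_left h1 (le_of_lt (hc0 n))
      calc κ n * (c n * ‖z‖^(n+2)) ≤ κ n * (c n * ‖z‖) := mul_le_mul_of_nonneg_left h2 (hκ0 n)
        _ = ‖z‖ * (κ n * c n) := by ring
    · have hκpos : (0:ℝ) < κ 0 := by
        simp only [hκ]
        push_cast
        nlinarith
      have hc00 := hc0 0
      have hzz : ‖z‖^(0+2) < ‖z‖ := by
        have : ‖z‖^(0+2) = ‖z‖*‖z‖ := by ring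
        rw [this]
        nlinarith
      calc κ 0 * (c 0 * ‖z‖^(0+2)) < κ 0 * (c 0 * ‖z‖) := by
            apply mul_lt_mul_of_pos_left ?_ hκpos
            exact mul_lt_mul_of_pos_left hzz hc00
        _ = ‖z‖ * (κ 0 * c 0) := by ring
  have hQnorm : ‖∑' n, Q n‖ ≤ ‖z‖ * Sig2 := by
    have heq : ‖z‖ * Sig2 = ∑' n, ‖z‖ * (e2 n * c n) := by rw [tsum_mul_left]
    rw [heq]
    refine le_trans (norm_tsum_le_tsum_norm (snormQ.congr (fun n => (normQ n).symm))) ?_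
    rw [tsum_congr normQ]
    refine Summable.tsum_le_tsum (fun n => ?_) snormQ (hS2R.mul_left _)
    have h1 : ‖z‖^(n+2) ≤ ‖z‖ := by
      calc ‖z‖^(n+2) ≤ ‖z‖^1 := pow_le_pow_of_le_one (norm_nonneg z) hz1le (by omega)
        _ = ‖z‖ := pow_one _
    have h2 : c n * ‖z‖^(n+2) ≤ c n * ‖z‖ := mul_le_mul_of_nonneg_left h1 (le_of_lt (hc0 n))
    calc e2 n * (c n * ‖z‖^(n+2)) ≤ e2 n * (c n * ‖z‖) := mul_le_mul_of_nonneg_left h2 (he20 n)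
      _ = ‖z‖ * (e2 n * c n) := by ring
  have hDlow : ‖z‖ * (1 - Sig2) ≤ ‖Dv‖ := by
    rw [hDval]
    have h1 : ‖z‖ - ‖∑' n, Q n‖ ≤ ‖z + ∑' n, Q n‖ := by
      simpa [sub_neg_eq_add] using norm_sub_norm_le z (-(∑' n, Q n))
    nlinarith [hQnorm, h1]
  have h1mS : (0:ℝ) < 1 - Sig2 := by linarith
  have hDpos : 0 < ‖Dv‖ := lt_of_lt_of_le (mul_pos hρ0 h1mS) hDlow
  have hDne : Dv ≠ 0 := by
    intro h
    rw [h, norm_zero] at hDpos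
    exact lt_irrefl 0 hDpos
  have hNDub : ‖Nv - Dv‖ < ‖z‖ * Sig1 := lt_of_le_of_lt hNDnorm hstrict
  have hS1le : Sig1 ≤ (1-α) * (1 - Sig2) := by nlinarith [hkey]
  have hfrac : ‖Nv - Dv‖ / ‖Dv‖ < 1 - α := by
    have h1 : ‖Nv - Dv‖ / ‖Dv‖ ≤ ‖Nv - Dv‖ / (‖z‖ * (1 - Sig2)) :=
      div_le_div_of_nonneg_left (norm_nonneg _) (mul_pos hρ0 h1mS) hDlow
    have h2 : ‖Nv - Dv‖ / (‖z‖ * (1 - Sig2)) < (‖z‖ * Sig1) / (‖z‖ * (1 - Sig2)) :=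
      (div_lt_div_iff_of_pos_right (mul_pos hρ0 h1mS)).mpr hNDub
    have h3 : (‖z‖ * Sig1) / (‖z‖ * (1 - Sig2)) = Sig1 / (1 - Sig2) :=
      mul_div_mul_left _ _ (ne_of_gt hρ0)
    have h4 : Sig1 / (1 - Sig2) ≤ 1 - α := (div_le_iff₀ h1mS).mpr (by nlinarith [hS1le])
    linarith
  have hquot : Nv / Dv = 1 + (Nv - Dv) / Dv := by field_simp; ring
  rw [hquot, Complex.add_re, Complex.one_re]
  have hre : -(‖(Nv - Dv)/Dv‖) ≤ ((Nv - Dv)/Dv).re := by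
    have h := Complex.abs_re_le_norm ((Nv-Dv)/Dv)
    exact (abs_le.mp h).1
  rw [norm_div] at hre
  linarith [hfrac, hre]
end part2main
end AuxStmt13

theorem stmt13 (lam μ α β γ : ℝ) (hlam : 1 ≤ lam) (hμ : 0.462 < μ)
    (hα0 : 0 ≤ α) (hα1 : α < 1) (hβ0 : 0 ≤ β) (hβ1 : β < 1) (hγ0 : 0 ≤ γ) (hγ1 : γ ≤ 1)
    (hcond : ((1 - α * β) * γ + (1 - α * β + (2 - (1 + β) * α) * γ) * μ) / μ ^ 2 *
      Real.exp (1 / μ) ≤ 1 - α) :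
    (Summable (fun n : ℕ =>
      (1 + ((n : ℝ) + 1) * γ) * (((n : ℝ) + 2) - α - ((n : ℝ) + 1) * α * β) *
        (Real.Gamma μ / Real.Gamma (lam * ((n : ℝ) + 1) + μ)) * Real.exp (-1 / μ) /
        (Nat.factorial (n + 1) : ℝ)) ∧
    ∑' n : ℕ,
      (1 + ((n : ℝ) + 1) * γ) * (((n : ℝ) + 2) - α - ((n : ℝ) + 1) * α * β) *
        (Real.Gamma μ / Real.Gamma (lam * ((n : ℝ) + 1) + μ)) * Real.exp (-1 / μ) /
        (Nat.factorial (n + 1) : ℝ) ≤ 1 - α) ∧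
    (∀ z ∈ Metric.ball (0 : ℂ) 1, z ≠ 0 →
      α < (((z * deriv (Ffun lam μ) z + (γ : ℂ) * z ^ 2 * deriv (deriv (Ffun lam μ)) z) /
        ((γ : ℂ) * z * (deriv (Ffun lam μ) z + (β : ℂ) * z * deriv (deriv (Ffun lam μ)) z) +
          (1 - (γ : ℂ)) * ((β : ℂ) * z * deriv (Ffun lam μ) z +
            (1 - (β : ℂ)) * Ffun lam μ z))).re)) := by
  have h1 := part1 lam μ α β γ hlam hμ hα0 hα1 hβ0 hβ1 hγ0 hγ1 hcond
  exact ⟨h1, part2 hlam hμ hα0 hα1 hβ0 hβ1 hγ0 hγ1 h1.1 h1.2⟩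
end
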